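/- arXiv:2410.21654 — 5 statements merged into one kernel-verified Lean document; each statement's English description precedes it below -/
import Mathlib

section
/- Let A be a Hopf algebra over a field F with bijective antipode S, quasitriangular with R-matrix R, with a sovereign element D and a balance b. Then (Ad(D), (R₂₁)⁻¹) is a twist pair for A and b⁻¹ is a boundary gauge transformation for (Ad(D), (R₂₁)⁻¹), where Ad(D)(a) = D·a·D⁻¹. -/
open TensorProduct

noncomputable section

variable (F : Type*) [Field F]

section BialgDefs

variable (A : Type*) [Ring A] [Bialgebra F A]

/-- Conjugation by an invertible element, as an algebra automorphism. -/
def conjEquiv (g gi : A) (h1 : g * gi = 1) (h2 : gi * g = 1) : A ≃ₐ[F] A where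
  toFun a := g * a * gi
  invFun a := gi * a * g
  left_inv a := by simp only [← mul_assoc]; rw [h2, one_mul, mul_assoc, h2, mul_one]
  right_inv a := by simp only [← mul_assoc]; rw [h1, one_mul, mul_assoc, h1, mul_one]
  map_mul' a b := by
    show g * (a * b) * gi = (g * a * gi) * (g * b * gi)
    simp only [mul_assoc]; rw [← mul_assoc gi g, h2, one_mul]
  map_add' a b := by
    show g * (a + b) * gi = g * a * gi + g * b * gi
    rw [mul_add, add_mul]
  commutes' r := by
    show g * algebraMap F A r * gi = algebraMap F A r
    rw [← Algebra.commutes r g, mul_assoc, h1, mul_one]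

/-- The coproduct of `A`, as an algebra map. -/
def cop : A →ₐ[F] A ⊗[F] A := Bialgebra.comulAlgHom F A

/-- The flip of the two tensor legs. -/
def flipT : (A ⊗[F] A) ≃ₐ[F] A ⊗[F] A := Algebra.TensorProduct.comm F A A

/-- The opposite coproduct. -/
def copOp : A →ₐ[F] A ⊗[F] A := (flipT F A).toAlgHom.comp (cop F A)

/-- `X ↦ X₁₂` on triple tensors. -/
def i12 : (A ⊗[F] A) →ₐ[F] A ⊗[F] (A ⊗[F] A) :=
  Algebra.TensorProduct.map (AlgHom.id F A) Algebra.TensorProduct.includeLeft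

/-- `X ↦ X₁₃` on triple tensors. -/
def i13 : (A ⊗[F] A) →ₐ[F] A ⊗[F] (A ⊗[F] A) :=
  Algebra.TensorProduct.map (AlgHom.id F A) Algebra.TensorProduct.includeRight

/-- `X ↦ X₂₃` on triple tensors. -/
def i23 : (A ⊗[F] A) →ₐ[F] A ⊗[F] (A ⊗[F] A) :=
  Algebra.TensorProduct.includeRight

/-- `Δ ⊗ id` landing in `A ⊗ (A ⊗ A)`. -/
def cop12 : (A ⊗[F] A) →ₐ[F] A ⊗[F] (A ⊗[F] A) :=
  (Algebra.TensorProduct.assoc F F F A A A).toAlgHom.comp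
    (Algebra.TensorProduct.map (cop F A) (AlgHom.id F A))

/-- `id ⊗ Δ`. -/
def cop23 : (A ⊗[F] A) →ₐ[F] A ⊗[F] (A ⊗[F] A) :=
  Algebra.TensorProduct.map (AlgHom.id F A) (cop F A)

/-- `ε ⊗ id`. -/
def counit2l : (A ⊗[F] A) →ₐ[F] A :=
  (Algebra.TensorProduct.lid F A).toAlgHom.comp
    (Algebra.TensorProduct.map (Bialgebra.counitAlgHom F A) (AlgHom.id F A))

/-- `id ⊗ ε`. -/
def counit2r : (A ⊗[F] A) →ₐ[F] A :=
  (Algebra.TensorProduct.rid F F A).toAlgHom.comp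
    (Algebra.TensorProduct.map (AlgHom.id F A) (Bialgebra.counitAlgHom F A))

/-- `ψ ⊗ φ` on `A ⊗ A`. -/
def mapT (ψ φ : A →ₐ[F] A) : (A ⊗[F] A) →ₐ[F] A ⊗[F] A := Algebra.TensorProduct.map ψ φ

/-- `R^ψ = (ψ ⊗ id)(R)`. -/
def rpsi (R : A ⊗[F] A) (ψ : A ≃ₐ[F] A) : A ⊗[F] A :=
  Algebra.TensorProduct.map ψ.toAlgHom (AlgHom.id F A) R

/-- `A` is quasitriangular with R-matrix `R` (with inverse `Ri`). -/
structure IsQT (R Ri : A ⊗[F] A) : Prop where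
  mulInv : R * Ri = 1
  invMul : Ri * R = 1
  intw : ∀ a : A, R * cop F A a * Ri = copOp F A a
  copL : cop12 F A R = i13 F A R * i23 F A R
  copR : cop23 F A R = i13 F A R * i12 F A R

/-- `(ψ, J)` is a twist pair (with `Ji` the inverse of `J`). -/
structure IsTwistPair (R Ri J Ji : A ⊗[F] A) (ψ : A ≃ₐ[F] A) : Prop where
  mulInv : J * Ji = 1
  invMul : Ji * J = 1
  cocycle : i12 F A J * cop12 F A J = i23 F A J * cop23 F A J
  counitL : counit2l F A J = 1
  counitR : counit2r F A J = 1
  intw : ∀ a : A,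
    mapT F A ψ.toAlgHom ψ.toAlgHom (copOp F A (ψ.symm a)) = J * cop F A a * Ji
  rrel : flipT F A (mapT F A ψ.toAlgHom ψ.toAlgHom R) = flipT F A J * R * Ji

/-- The image of `s ⊗ A` inside `A ⊗ A`, for a subset `s ⊆ A`. -/
def legSpan (s : Set A) : Submodule F (A ⊗[F] A) :=
  Submodule.span F {x : A ⊗[F] A | ∃ b ∈ s, ∃ a : A, x = b ⊗ₜ[F] a}

/-- `B` is a right coideal subalgebra of `A`. -/
def IsRightCoideal (B : Subalgebra F A) : Prop :=
  ∀ b ∈ B, cop F A b ∈ legSpan F A (B : Set A)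

/-- The tensor K-matrix `𝕂 = (R^ψ)₂₁ ⬝ (1 ⊗ K) ⬝ R`. -/
def tenK (R : A ⊗[F] A) (ψ : A ≃ₐ[F] A) (K : A) : A ⊗[F] A :=
  flipT F A (rpsi F A R ψ) * ((1 : A) ⊗ₜ[F] K) * R

/-- `(ψ, J, K)` is a cylindrical structure on `(A, B)`. -/
structure IsCylindrical (R Ri : A ⊗[F] A) (B : Subalgebra F A) (J Ji : A ⊗[F] A)
    (ψ : A ≃ₐ[F] A) (K Kinv : A) : Prop where
  twist : IsTwistPair F A R Ri J Ji ψ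
  kMulInv : K * Kinv = 1
  kInvMul : Kinv * K = 1
  intwB : ∀ b ∈ B, K * b * Kinv = ψ b
  support : tenK F A R ψ K ∈ legSpan F A (B : Set A)
  copK : cop F A K = Ji * (((1 : A) ⊗ₜ[F] K) * (rpsi F A R ψ * (K ⊗ₜ[F] (1 : A))))

end BialgDefs

section ModuleDefs

variable (A : Type*) [Ring A] [Bialgebra F A]

/-- Right partial transpose on `End V ⊗ End W`. -/
def pt2 (V W : Type*) [AddCommGroup V] [Module F V] [AddCommGroup W] [Module F W] :
    (Module.End F V ⊗[F] Module.End F W) →ₗ[F]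
      (Module.End F V ⊗[F] Module.End F (Module.Dual F W)) :=
  TensorProduct.map LinearMap.id (Module.Dual.transpose (R := F) (M := W) (M' := W))

/-- Identification `End V ⊗ End (W^∨∨) ≃ End V ⊗ End W` via the canonical iso `W ≅ W^∨∨`. -/
def ddIdent (V W : Type*) [AddCommGroup V] [Module F V] [AddCommGroup W] [Module F W]
    [FiniteDimensional F W] :
    (Module.End F V ⊗[F] Module.End F (Module.Dual F (Module.Dual F W))) →ₗ[F]
      (Module.End F V ⊗[F] Module.End F W) :=
  TensorProduct.map LinearMap.id ((Module.evalEquiv F W).conj.symm).toLinearMap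

/-- The right partial trace `A ⊗ End V → A`. -/
def trace2 (V : Type*) [AddCommGroup V] [Module F V] :
    (A ⊗[F] Module.End F V) →ₗ[F] A :=
  (TensorProduct.rid F A).toLinearMap.comp
    (TensorProduct.map LinearMap.id (LinearMap.trace F V))

/-- `T_{•,V}`: act with the second leg on `V`. -/
def actRight (V : Type*) [AddCommGroup V] [Module F V] (ρV : A →ₐ[F] Module.End F V) :
    (A ⊗[F] A) →ₐ[F] A ⊗[F] Module.End F V :=
  Algebra.TensorProduct.map (AlgHom.id F A) ρV

/-- The boundary transfer matrix `Tr₂(𝕂₍•,V₎)`. -/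
def transfer (V : Type*) [AddCommGroup V] [Module F V] (ρV : A →ₐ[F] Module.End F V)
    (T : A ⊗[F] A) : A :=
  trace2 F A V (actRight F A V ρV T)

/-- The module structure on `V ⊗ W` obtained from `Δ`. -/
def tensorRep (V W : Type*) [AddCommGroup V] [Module F V] [AddCommGroup W] [Module F W]
    (ρV : A →ₐ[F] Module.End F V) (ρW : A →ₐ[F] Module.End F W) :
    A →ₐ[F] Module.End F (V ⊗[F] W) :=
  (Module.endTensorEndAlgHom (R := F) (S := F) (A := F) (M := V) (N := W)).comp
    ((Algebra.TensorProduct.map ρV ρW).comp (cop F A))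

/-- `g` (with inverse `gi`) is a boundary gauge transformation for the twist pair `(ψ, J)`. -/
def IsBoundaryGauge (R J : A ⊗[F] A) (ψ : A ≃ₐ[F] A) (g gi : A)
    (hg1 : g * gi = 1) (hg2 : gi * g = 1) : Prop :=
  ∀ (V W : Type) [AddCommGroup V] [Module F V] [FiniteDimensional F V]
    [AddCommGroup W] [Module F W] [FiniteDimensional F W]
    (ρV : A →ₐ[F] Module.End F V) (ρW : A →ₐ[F] Module.End F W),
    let X := pt2 F V W
      ((Algebra.TensorProduct.map
        (ρV.comp (ψ.trans (conjEquiv F A g gi hg1 hg2)).toAlgHom) ρW) R)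
    IsUnit X ∧ IsUnit (pt2 F V (Module.Dual F W) (Ring.inverse X)) ∧
      (Algebra.TensorProduct.map ρV ρW) ((g ⊗ₜ[F] g) * J * cop F A gi) =
        ddIdent F V W (Ring.inverse (pt2 F V (Module.Dual F W) (Ring.inverse X)))

end ModuleDefs

namespace St13

open Algebra.TensorProduct TensorProduct

section Perm

variable (F : Type*) [Field F] (A : Type*) [Ring A] [Bialgebra F A]

/-- swap legs 2,3 of `A ⊗ (A ⊗ A)` -/
noncomputable def sw23 : A ⊗[F] (A ⊗[F] A) ≃ₐ[F] A ⊗[F] (A ⊗[F] A) :=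
  Algebra.TensorProduct.congr AlgEquiv.refl (Algebra.TensorProduct.comm F A A)

/-- swap legs 1,2 -/
noncomputable def sw12 : A ⊗[F] (A ⊗[F] A) ≃ₐ[F] A ⊗[F] (A ⊗[F] A) :=
  Algebra.TensorProduct.leftComm F A A A

noncomputable def sig1 : A ⊗[F] (A ⊗[F] A) ≃ₐ[F] A ⊗[F] (A ⊗[F] A) :=
  (sw12 F A).trans (sw23 F A)

noncomputable def sig2 : A ⊗[F] (A ⊗[F] A) ≃ₐ[F] A ⊗[F] (A ⊗[F] A) :=
  (sw23 F A).trans (sw12 F A)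

noncomputable def p13 : A ⊗[F] (A ⊗[F] A) ≃ₐ[F] A ⊗[F] (A ⊗[F] A) :=
  ((sw23 F A).trans (sw12 F A)).trans (sw23 F A)

@[simp] lemma sw23_tmul (x y z : A) :
    sw23 F A (x ⊗ₜ[F] (y ⊗ₜ[F] z)) = x ⊗ₜ[F] (z ⊗ₜ[F] y) := rfl

@[simp] lemma sw12_tmul (x y z : A) :
    sw12 F A (x ⊗ₜ[F] (y ⊗ₜ[F] z)) = y ⊗ₜ[F] (x ⊗ₜ[F] z) := rfl

@[simp] lemma sig1_tmul (x y z : A) :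
    sig1 F A (x ⊗ₜ[F] (y ⊗ₜ[F] z)) = y ⊗ₜ[F] (z ⊗ₜ[F] x) := rfl

@[simp] lemma sig2_tmul (x y z : A) :
    sig2 F A (x ⊗ₜ[F] (y ⊗ₜ[F] z)) = z ⊗ₜ[F] (x ⊗ₜ[F] y) := rfl

@[simp] lemma p13_tmul (x y z : A) :
    p13 F A (x ⊗ₜ[F] (y ⊗ₜ[F] z)) = z ⊗ₜ[F] (y ⊗ₜ[F] x) := rfl

end Perm

end St13
namespace St13

open Algebra.TensorProduct TensorProduct

section Bialg

variable (F : Type*) [Field F] (A : Type*) [Ring A] [Bialgebra F A]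

@[simp] lemma flipT_tmul (x y : A) : flipT F A (x ⊗ₜ[F] y) = y ⊗ₜ[F] x := rfl

lemma flipT_flipT (u : A ⊗[F] A) : flipT F A (flipT F A u) = u := by
  induction u using TensorProduct.induction_on with
  | zero => simp
  | tmul x y => rfl
  | add x y hx hy => rw [map_add, map_add, hx, hy]

@[simp] lemma i12_tmul (a b : A) :
    i12 F A (a ⊗ₜ[F] b) = a ⊗ₜ[F] (b ⊗ₜ[F] (1 : A)) := by
  simp [i12]

@[simp] lemma i13_tmul (a b : A) :
    i13 F A (a ⊗ₜ[F] b) = a ⊗ₜ[F] ((1 : A) ⊗ₜ[F] b) := by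
  simp [i13]

@[simp] lemma i23_apply (u : A ⊗[F] A) : i23 F A u = (1 : A) ⊗ₜ[F] u := rfl

lemma i12_eq_assoc (u : A ⊗[F] A) :
    i12 F A u = (Algebra.TensorProduct.assoc F F F A A A) (u ⊗ₜ[F] (1 : A)) := by
  induction u using TensorProduct.induction_on with
  | zero => simp
  | tmul a b => simp
  | add x y hx hy => rw [map_add, hx, hy, ← map_add, ← add_tmul]

@[simp] lemma cop12_tmul (x y : A) :
    cop12 F A (x ⊗ₜ[F] y) = (Algebra.TensorProduct.assoc F F F A A A) (cop F A x ⊗ₜ[F] y) := by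
  simp [cop12]

@[simp] lemma cop23_tmul (x y : A) :
    cop23 F A (x ⊗ₜ[F] y) = x ⊗ₜ[F] cop F A y := by
  simp [cop23]

@[simp] lemma counit2l_tmul (x y : A) :
    counit2l F A (x ⊗ₜ[F] y) = Bialgebra.counitAlgHom F A x • y := by
  simp [counit2l]

@[simp] lemma counit2r_tmul (x y : A) :
    counit2r F A (x ⊗ₜ[F] y) = Bialgebra.counitAlgHom F A y • x := by
  simp [counit2r]

lemma counit2l_flip (u : A ⊗[F] A) :
    counit2l F A (flipT F A u) = counit2r F A u := by
  induction u using TensorProduct.induction_on with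
  | zero => simp
  | tmul x y => simp
  | add x y hx hy => rw [map_add, map_add, map_add, hx, hy]

lemma counit2r_flip (u : A ⊗[F] A) :
    counit2r F A (flipT F A u) = counit2l F A u := by
  induction u using TensorProduct.induction_on with
  | zero => simp
  | tmul x y => simp
  | add x y hx hy => rw [map_add, map_add, map_add, hx, hy]

lemma counit2l_cop (x : A) : counit2l F A (cop F A x) = x := by
  have h : ∀ w : A ⊗[F] A, counit2l F A w =
      TensorProduct.lid F A (LinearMap.rTensor A (Coalgebra.counit (R := F)) w) := by
    intro w
    induction w using TensorProduct.induction_on with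
    | zero => simp
    | tmul p q => simp
    | add x y hx hy => rw [map_add, map_add, map_add, hx, hy]
  rw [h, show cop F A x = Coalgebra.comul x from rfl, Coalgebra.rTensor_counit_comul]
  simp

lemma counit2r_cop (x : A) : counit2r F A (cop F A x) = x := by
  have h : ∀ w : A ⊗[F] A, counit2r F A w =
      TensorProduct.rid F A (LinearMap.lTensor A (Coalgebra.counit (R := F)) w) := by
    intro w
    induction w using TensorProduct.induction_on with
    | zero => simp
    | tmul p q => simp
    | add x y hx hy => rw [map_add, map_add, map_add, hx, hy]
  rw [h, show cop F A x = Coalgebra.comul x from rfl, Coalgebra.lTensor_counit_comul]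
  simp

@[simp] lemma copOp_apply (x : A) : copOp F A x = flipT F A (cop F A x) := rfl

end Bialg

end St13
namespace St13

open Algebra.TensorProduct TensorProduct

section Bialg2

variable (F : Type*) [Field F] (A : Type*) [Ring A] [Bialgebra F A]

lemma sig1_tmul_right (x : A) (w : A ⊗[F] A) :
    sig1 F A (x ⊗ₜ[F] w) = (Algebra.TensorProduct.assoc F F F A A A) (w ⊗ₜ[F] x) := by
  induction w using TensorProduct.induction_on with
  | zero => simp
  | tmul p q => simp
  | add u v hu hv => rw [tmul_add, map_add, hu, hv, ← map_add, ← add_tmul]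

lemma sig2_assoc (w : A ⊗[F] A) (y : A) :
    sig2 F A ((Algebra.TensorProduct.assoc F F F A A A) (w ⊗ₜ[F] y)) = y ⊗ₜ[F] w := by
  induction w using TensorProduct.induction_on with
  | zero => simp
  | tmul p q => simp
  | add u v hu hv =>
      rw [add_tmul, map_add, map_add, hu, hv, ← tmul_add]

lemma sw12_assoc (w : A ⊗[F] A) (y : A) :
    sw12 F A ((Algebra.TensorProduct.assoc F F F A A A) (w ⊗ₜ[F] y)) =
      (Algebra.TensorProduct.assoc F F F A A A) (flipT F A w ⊗ₜ[F] y) := by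
  induction w using TensorProduct.induction_on with
  | zero => simp
  | tmul p q => simp
  | add u v hu hv =>
      rw [add_tmul, map_add, map_add, hu, hv, map_add, ← map_add, ← add_tmul]

lemma sig1_cop23 (u : A ⊗[F] A) :
    sig1 F A (cop23 F A u) = cop12 F A (flipT F A u) := by
  induction u using TensorProduct.induction_on with
  | zero => simp
  | tmul x y => rw [cop23_tmul, sig1_tmul_right, flipT_tmul, cop12_tmul]
  | add x y hx hy => rw [map_add, map_add, map_add, map_add, hx, hy]

lemma sig2_cop12 (u : A ⊗[F] A) :
    sig2 F A (cop12 F A u) = cop23 F A (flipT F A u) := by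
  induction u using TensorProduct.induction_on with
  | zero => simp
  | tmul x y => rw [cop12_tmul, sig2_assoc, flipT_tmul, cop23_tmul]
  | add x y hx hy => rw [map_add, map_add, map_add, map_add, hx, hy]

lemma sig1_i13 (u : A ⊗[F] A) :
    sig1 F A (i13 F A u) = i23 F A (flipT F A u) := by
  induction u using TensorProduct.induction_on with
  | zero => simp
  | tmul a c => simp [tmul_add]
  | add x y hx hy => rw [map_add, map_add, map_add, hx, hy, i23_apply, i23_apply,
      i23_apply, tmul_add]

lemma sig1_i12 (u : A ⊗[F] A) :
    sig1 F A (i12 F A u) = i13 F A (flipT F A u) := by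
  induction u using TensorProduct.induction_on with
  | zero => simp
  | tmul a c => simp
  | add x y hx hy => rw [map_add, map_add, map_add, map_add, hx, hy]

lemma sig2_i13 (u : A ⊗[F] A) :
    sig2 F A (i13 F A u) = i12 F A (flipT F A u) := by
  induction u using TensorProduct.induction_on with
  | zero => simp
  | tmul a c => simp
  | add x y hx hy => rw [map_add, map_add, map_add, map_add, hx, hy]

lemma sig2_i23 (u : A ⊗[F] A) :
    sig2 F A (i23 F A u) = i13 F A (flipT F A u) := by
  induction u using TensorProduct.induction_on with
  | zero => simp
  | tmul a c => simp
  | add x y hx hy => rw [i23_apply, tmul_add, map_add, ← i23_apply, ← i23_apply, hx, hy,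
      ← map_add, ← map_add]

lemma p13_i12 (u : A ⊗[F] A) :
    p13 F A (i12 F A u) = i23 F A (flipT F A u) := by
  induction u using TensorProduct.induction_on with
  | zero => simp
  | tmul a c => simp
  | add x y hx hy => rw [map_add, map_add, map_add, hx, hy, i23_apply, i23_apply,
      i23_apply, tmul_add]

lemma p13_i13 (u : A ⊗[F] A) :
    p13 F A (i13 F A u) = i13 F A (flipT F A u) := by
  induction u using TensorProduct.induction_on with
  | zero => simp
  | tmul a c => simp
  | add x y hx hy => rw [map_add, map_add, map_add, map_add, hx, hy]

lemma p13_i23 (u : A ⊗[F] A) :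
    p13 F A (i23 F A u) = i12 F A (flipT F A u) := by
  induction u using TensorProduct.induction_on with
  | zero => simp
  | tmul a c => simp
  | add x y hx hy => rw [i23_apply, tmul_add, map_add, ← i23_apply, ← i23_apply, hx, hy,
      ← map_add, ← map_add]

lemma sw12_i13 (u : A ⊗[F] A) :
    sw12 F A (i13 F A u) = i23 F A u := by
  induction u using TensorProduct.induction_on with
  | zero => simp
  | tmul a c => simp
  | add x y hx hy => rw [map_add, map_add, hx, hy, i23_apply, i23_apply, i23_apply,
      tmul_add]

lemma sw12_i23 (u : A ⊗[F] A) :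
    sw12 F A (i23 F A u) = i13 F A u := by
  induction u using TensorProduct.induction_on with
  | zero => simp
  | tmul a c => simp
  | add x y hx hy => rw [i23_apply, tmul_add, map_add, ← i23_apply, ← i23_apply, hx, hy,
      ← map_add]

/-- `Δᵒᵖ ⊗ id`. -/
noncomputable def copOp12 : (A ⊗[F] A) →ₐ[F] A ⊗[F] (A ⊗[F] A) :=
  (Algebra.TensorProduct.assoc F F F A A A).toAlgHom.comp
    (Algebra.TensorProduct.map (copOp F A) (AlgHom.id F A))

@[simp] lemma copOp12_tmul (x y : A) :
    copOp12 F A (x ⊗ₜ[F] y) =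
      (Algebra.TensorProduct.assoc F F F A A A) (flipT F A (cop F A x) ⊗ₜ[F] y) := by
  simp [copOp12]

lemma copOp12_eq (u : A ⊗[F] A) : copOp12 F A u = sw12 F A (cop12 F A u) := by
  induction u using TensorProduct.induction_on with
  | zero => simp
  | tmul x y => rw [copOp12_tmul, cop12_tmul, sw12_assoc]
  | add x y hx hy => rw [map_add, map_add, map_add, hx, hy]

/-- `ε ⊗ id ⊗ id` -/
noncomputable def kap : A ⊗[F] (A ⊗[F] A) →ₐ[F] A ⊗[F] A :=
  (Algebra.TensorProduct.lid F (A ⊗[F] A)).toAlgHom.comp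
    (Algebra.TensorProduct.map (Bialgebra.counitAlgHom F A) (AlgHom.id F (A ⊗[F] A)))

@[simp] lemma kap_tmul (x : A) (w : A ⊗[F] A) :
    kap F A (x ⊗ₜ[F] w) = Bialgebra.counitAlgHom F A x • w := by
  simp [kap]

lemma kap_assoc (w : A ⊗[F] A) (y : A) :
    kap F A ((Algebra.TensorProduct.assoc F F F A A A) (w ⊗ₜ[F] y)) =
      counit2l F A w ⊗ₜ[F] y := by
  induction w using TensorProduct.induction_on with
  | zero => simp
  | tmul p q => simp [smul_tmul']
  | add u v hu hv => rw [add_tmul, map_add, map_add, hu, hv, map_add, ← add_tmul]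

lemma kap_cop12 (u : A ⊗[F] A) : kap F A (cop12 F A u) = u := by
  induction u using TensorProduct.induction_on with
  | zero => simp
  | tmul x y => rw [cop12_tmul, kap_assoc, counit2l_cop]
  | add x y hx hy => rw [map_add, map_add, hx, hy]

lemma kap_i13 (u : A ⊗[F] A) :
    kap F A (i13 F A u) = (1 : A) ⊗ₜ[F] counit2l F A u := by
  induction u using TensorProduct.induction_on with
  | zero => simp
  | tmul a c => simp
  | add x y hx hy => rw [map_add, map_add, hx, hy, map_add, tmul_add]

lemma kap_i23 (u : A ⊗[F] A) : kap F A (i23 F A u) = u := by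
  rw [i23_apply, kap_tmul, map_one, one_smul]

/-- `id ⊗ id ⊗ ε` -/
noncomputable def theta : A ⊗[F] (A ⊗[F] A) →ₐ[F] A ⊗[F] A :=
  Algebra.TensorProduct.map (AlgHom.id F A) (counit2r F A)

@[simp] lemma theta_tmul (x : A) (w : A ⊗[F] A) :
    theta F A (x ⊗ₜ[F] w) = x ⊗ₜ[F] counit2r F A w := by
  simp [theta]

lemma theta_cop23 (u : A ⊗[F] A) : theta F A (cop23 F A u) = u := by
  induction u using TensorProduct.induction_on with
  | zero => simp
  | tmul x y => rw [cop23_tmul, theta_tmul, counit2r_cop]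
  | add x y hx hy => rw [map_add, map_add, hx, hy]

lemma theta_i13 (u : A ⊗[F] A) :
    theta F A (i13 F A u) = counit2r F A u ⊗ₜ[F] (1 : A) := by
  induction u using TensorProduct.induction_on with
  | zero => simp
  | tmul a c => simp [smul_tmul']
  | add x y hx hy => rw [map_add, map_add, hx, hy, map_add, add_tmul]

lemma theta_i12 (u : A ⊗[F] A) : theta F A (i12 F A u) = u := by
  induction u using TensorProduct.induction_on with
  | zero => simp
  | tmul a c => simp
  | add x y hx hy => rw [map_add, map_add, hx, hy]

end Bialg2

end St13
namespace St13

open Algebra.TensorProduct TensorProduct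

section Bialg3

variable (F : Type*) [Field F] (A : Type*) [Ring A] [Bialgebra F A]

/-- `A ⊗ A` with opposite multiplication on the second factor. -/
noncomputable def op2 : (A ⊗[F] A) ≃ₗ[F] (A ⊗[F] Aᵐᵒᵖ) :=
  TensorProduct.congr (LinearEquiv.refl F A) (MulOpposite.opLinearEquiv F)

/-- The product with reversed order in the second leg. -/
noncomputable def star2 (u v : A ⊗[F] A) : A ⊗[F] A :=
  (op2 F A).symm (op2 F A u * op2 F A v)

@[simp] lemma star2_tmul (a b c d : A) :
    star2 F A (a ⊗ₜ[F] b) (c ⊗ₜ[F] d) = (a * c) ⊗ₜ[F] (d * b) := by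
  simp [star2, op2, Algebra.TensorProduct.tmul_mul_tmul, ← MulOpposite.op_mul]

@[simp] lemma star2_zero_left (v : A ⊗[F] A) : star2 F A 0 v = 0 := by
  simp [star2]

@[simp] lemma star2_zero_right (u : A ⊗[F] A) : star2 F A u 0 = 0 := by
  simp [star2]

lemma star2_add_left (u u' v : A ⊗[F] A) :
    star2 F A (u + u') v = star2 F A u v + star2 F A u' v := by
  simp [star2, add_mul]

lemma star2_add_right (u v v' : A ⊗[F] A) :
    star2 F A u (v + v') = star2 F A u v + star2 F A u v' := by
  simp [star2, mul_add]

lemma central_tmul (c : A) (hc : ∀ a : A, c * a = a * c) (u : A ⊗[F] A) :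
    (c ⊗ₜ[F] c) * u = u * (c ⊗ₜ[F] c) := by
  induction u using TensorProduct.induction_on with
  | zero => simp
  | tmul x y => rw [Algebra.TensorProduct.tmul_mul_tmul,
      Algebra.TensorProduct.tmul_mul_tmul, hc x, hc y]
  | add x y hx hy => rw [mul_add, add_mul, hx, hy]

lemma mapT_conj (g gi : A) (h1 : g * gi = 1) (h2 : gi * g = 1) (u : A ⊗[F] A) :
    mapT F A (conjEquiv F A g gi h1 h2).toAlgHom (conjEquiv F A g gi h1 h2).toAlgHom u =
      (g ⊗ₜ[F] g) * u * (gi ⊗ₜ[F] gi) := by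
  induction u using TensorProduct.induction_on with
  | zero => simp
  | tmul x y =>
      show (g * x * gi) ⊗ₜ[F] (g * y * gi) = _
      rw [Algebra.TensorProduct.tmul_mul_tmul, Algebra.TensorProduct.tmul_mul_tmul]
  | add x y hx hy => rw [map_add, mul_add, add_mul, hx, hy]

lemma map_comp_fst {B C : Type*} [Ring B] [Algebra F B] [Ring C] [Algebra F C]
    (f : A →ₐ[F] A) (ρV : A →ₐ[F] B) (ρW : A →ₐ[F] C) (u : A ⊗[F] A) :
    Algebra.TensorProduct.map (ρV.comp f) ρW u =
      Algebra.TensorProduct.map ρV ρW (Algebra.TensorProduct.map f (AlgHom.id F A) u) := by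
  induction u using TensorProduct.induction_on with
  | zero => simp
  | tmul x y => simp
  | add x y hx hy => rw [map_add, map_add, map_add, hx, hy]

end Bialg3

section Hopf

variable (F : Type*) [Field F] (A : Type*) [Ring A] [HopfAlgebra F A]

/-- `S ⊗ id` as a linear map. -/
noncomputable def smap : A ⊗[F] A →ₗ[F] A ⊗[F] A :=
  TensorProduct.map (HopfAlgebra.antipode (R := F) (A := A)) LinearMap.id

@[simp] lemma smap_tmul (a c : A) :
    smap F A (a ⊗ₜ[F] c) = HopfAlgebra.antipode (R := F) a ⊗ₜ[F] c := rfl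

/-- `x ⊗ (y ⊗ z) ↦ (S x * y) ⊗ z`. -/
noncomputable def nuMap : A ⊗[F] (A ⊗[F] A) →ₗ[F] A ⊗[F] A :=
  (TensorProduct.map (LinearMap.mul' F A) LinearMap.id).comp
    (((TensorProduct.assoc F A A A).symm.toLinearMap).comp
      (TensorProduct.map (HopfAlgebra.antipode (R := F) (A := A)) LinearMap.id))

@[simp] lemma nuMap_tmul (x y z : A) :
    nuMap F A (x ⊗ₜ[F] (y ⊗ₜ[F] z)) = (HopfAlgebra.antipode (R := F) x * y) ⊗ₜ[F] z := by
  simp [nuMap]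

/-- `x ⊗ (y ⊗ z) ↦ (x * S y) ⊗ z`. -/
noncomputable def muMap : A ⊗[F] (A ⊗[F] A) →ₗ[F] A ⊗[F] A :=
  (TensorProduct.map (LinearMap.mul' F A) LinearMap.id).comp
    (((TensorProduct.assoc F A A A).symm.toLinearMap).comp
      (TensorProduct.map LinearMap.id
        (TensorProduct.map (HopfAlgebra.antipode (R := F) (A := A)) LinearMap.id)))

@[simp] lemma muMap_tmul (x y z : A) :
    muMap F A (x ⊗ₜ[F] (y ⊗ₜ[F] z)) = (x * HopfAlgebra.antipode (R := F) y) ⊗ₜ[F] z := by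
  simp [muMap]

lemma nuMap_i13_i23 (u v : A ⊗[F] A) :
    nuMap F A (i13 F A u * i23 F A v) = smap F A u * v := by
  induction u using TensorProduct.induction_on with
  | zero => simp
  | tmul a c =>
      induction v using TensorProduct.induction_on with
      | zero => simp
      | tmul p q =>
          rw [i13_tmul, i23_apply, Algebra.TensorProduct.tmul_mul_tmul,
            Algebra.TensorProduct.tmul_mul_tmul, nuMap_tmul, smap_tmul,
            Algebra.TensorProduct.tmul_mul_tmul, mul_one, one_mul]
      | add p q hp hq => rw [map_add, mul_add, map_add, hp, hq, mul_add]
  | add x y hx hy => rw [map_add, add_mul, map_add, hx, hy, map_add, add_mul]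

lemma nuMap_i23_i13 (u v : A ⊗[F] A) :
    nuMap F A (i23 F A u * i13 F A v) = star2 F A (smap F A v) u := by
  induction u using TensorProduct.induction_on with
  | zero => simp
  | tmul a c =>
      induction v using TensorProduct.induction_on with
      | zero => simp
      | tmul p q =>
          rw [i13_tmul, i23_apply, Algebra.TensorProduct.tmul_mul_tmul,
            Algebra.TensorProduct.tmul_mul_tmul, nuMap_tmul, smap_tmul, star2_tmul,
            one_mul, mul_one]
      | add p q hp hq => rw [map_add, mul_add, map_add, hp, hq, map_add, star2_add_left]
  | add x y hx hy =>
      rw [i23_apply, tmul_add, ← i23_apply, ← i23_apply, add_mul, map_add, hx, hy,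
        star2_add_right]

lemma muMap_i23_i13 (u v : A ⊗[F] A) :
    muMap F A (i23 F A u * i13 F A v) = star2 F A v (smap F A u) := by
  induction u using TensorProduct.induction_on with
  | zero => simp
  | tmul a c =>
      induction v using TensorProduct.induction_on with
      | zero => simp
      | tmul p q =>
          rw [i13_tmul, i23_apply, Algebra.TensorProduct.tmul_mul_tmul,
            Algebra.TensorProduct.tmul_mul_tmul, muMap_tmul, smap_tmul, star2_tmul,
            one_mul, mul_one]
      | add p q hp hq => rw [map_add, mul_add, map_add, hp, hq, star2_add_left]
  | add x y hx hy =>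
      rw [i23_apply, tmul_add, ← i23_apply, ← i23_apply, add_mul, map_add, hx, hy,
        map_add, star2_add_right]

lemma nuMap_assoc (w : A ⊗[F] A) (y : A) :
    nuMap F A ((Algebra.TensorProduct.assoc F F F A A A) (w ⊗ₜ[F] y)) =
      (LinearMap.mul' F A
        (LinearMap.rTensor A (HopfAlgebra.antipode (R := F) (A := A)) w)) ⊗ₜ[F] y := by
  induction w using TensorProduct.induction_on with
  | zero => simp
  | tmul p q => simp
  | add u v hu hv => rw [add_tmul, map_add, map_add, hu, hv, map_add, map_add, add_tmul]

lemma muMap_assoc (w : A ⊗[F] A) (y : A) :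
    muMap F A ((Algebra.TensorProduct.assoc F F F A A A) (w ⊗ₜ[F] y)) =
      (LinearMap.mul' F A
        (LinearMap.lTensor A (HopfAlgebra.antipode (R := F) (A := A)) w)) ⊗ₜ[F] y := by
  induction w using TensorProduct.induction_on with
  | zero => simp
  | tmul p q => simp
  | add u v hu hv => rw [add_tmul, map_add, map_add, hu, hv, map_add, map_add, add_tmul]

lemma nuMap_cop12 (u : A ⊗[F] A) :
    nuMap F A (cop12 F A u) = (1 : A) ⊗ₜ[F] counit2l F A u := by
  induction u using TensorProduct.induction_on with
  | zero => simp
  | tmul x y =>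
      rw [cop12_tmul, nuMap_assoc, show cop F A x = Coalgebra.comul x from rfl,
        HopfAlgebra.mul_antipode_rTensor_comul_apply, counit2l_tmul,
        Algebra.algebraMap_eq_smul_one, smul_tmul]
      rfl
  | add x y hx hy => rw [map_add, map_add, hx, hy, map_add, tmul_add]

lemma muMap_cop12 (u : A ⊗[F] A) :
    muMap F A (cop12 F A u) = (1 : A) ⊗ₜ[F] counit2l F A u := by
  induction u using TensorProduct.induction_on with
  | zero => simp
  | tmul x y =>
      rw [cop12_tmul, muMap_assoc, show cop F A x = Coalgebra.comul x from rfl,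
        HopfAlgebra.mul_antipode_lTensor_comul_apply, counit2l_tmul,
        Algebra.algebraMap_eq_smul_one, smul_tmul]
      rfl
  | add x y hx hy => rw [map_add, map_add, hx, hy, map_add, tmul_add]

lemma mapfst_eq_smap_smap (f : A →ₐ[F] A)
    (hf : ∀ a : A, f a = HopfAlgebra.antipode (R := F) (HopfAlgebra.antipode (R := F) a))
    (u : A ⊗[F] A) :
    Algebra.TensorProduct.map f (AlgHom.id F A) u = smap F A (smap F A u) := by
  induction u using TensorProduct.induction_on with
  | zero => simp
  | tmul x y => simp [hf x]
  | add x y hx hy => rw [map_add, map_add, map_add, hx, hy]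

end Hopf

end St13
namespace St13

open Algebra.TensorProduct TensorProduct

section Mod
set_option synthInstance.maxHeartbeats 800000
set_option maxHeartbeats 1600000

variable (F : Type*) [Field F]
variable (V W : Type*) [AddCommGroup V] [Module F V] [AddCommGroup W] [Module F W]

@[simp] lemma pt2_tmul (f : Module.End F V) (g : Module.End F W) :
    pt2 F V W (f ⊗ₜ[F] g) = f ⊗ₜ[F] (Module.Dual.transpose (R := F) g) := rfl

lemma transpose_one :
    Module.Dual.transpose (R := F) (M := W) (M' := W) (1 : Module.End F W) = 1 := by
  ext φ w
  simp [Module.Dual.transpose_apply]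

lemma transpose_mul (g h : Module.End F W) :
    Module.Dual.transpose (R := F) g * Module.Dual.transpose (R := F) h =
      Module.Dual.transpose (R := F) (h * g) := by
  rw [Module.End.mul_eq_comp, Module.End.mul_eq_comp, Module.Dual.transpose_comp]

lemma pt2_one : pt2 F V W 1 = 1 := by
  rw [Algebra.TensorProduct.one_def, pt2_tmul, show (1 : Module.End F V) = 1 from rfl,
    transpose_one, ← Algebra.TensorProduct.one_def]

variable {A : Type*} [Ring A] [Bialgebra F A]
variable (ρV : A →ₐ[F] Module.End F V) (ρW : A →ₐ[F] Module.End F W)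

lemma pt2_map_mul (u v : A ⊗[F] A) :
    pt2 F V W (Algebra.TensorProduct.map ρV ρW u) *
      pt2 F V W (Algebra.TensorProduct.map ρV ρW v) =
    pt2 F V W (Algebra.TensorProduct.map ρV ρW (star2 F A u v)) := by
  induction u using TensorProduct.induction_on with
  | zero => simp
  | tmul a c =>
      induction v using TensorProduct.induction_on with
      | zero => simp
      | tmul p q =>
          rw [star2_tmul, Algebra.TensorProduct.map_tmul, Algebra.TensorProduct.map_tmul,
            Algebra.TensorProduct.map_tmul, pt2_tmul, pt2_tmul, pt2_tmul,
            Algebra.TensorProduct.tmul_mul_tmul, transpose_mul, ← map_mul, ← map_mul]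
      | add p q hp hq => rw [star2_add_right, map_add, map_add, map_add, map_add, mul_add,
          hp, hq]
  | add x y hx hy => rw [star2_add_left, map_add, map_add, map_add, map_add, add_mul,
      hx, hy]

lemma pt2_pt2_mul (P Q : Module.End F V ⊗[F] Module.End F W) :
    pt2 F V (Module.Dual F W) (pt2 F V W (P * Q)) =
      pt2 F V (Module.Dual F W) (pt2 F V W P) *
        pt2 F V (Module.Dual F W) (pt2 F V W Q) := by
  induction P using TensorProduct.induction_on with
  | zero => simp
  | tmul f g =>
      induction Q using TensorProduct.induction_on with
      | zero => simp
      | tmul f' g' =>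
          rw [Algebra.TensorProduct.tmul_mul_tmul, pt2_tmul, pt2_tmul, pt2_tmul, pt2_tmul,
            pt2_tmul, pt2_tmul, Algebra.TensorProduct.tmul_mul_tmul, ← transpose_mul,
            ← transpose_mul]
      | add p q hp hq => rw [mul_add, map_add, map_add, map_add, map_add, mul_add, hp, hq]
  | add x y hx hy => rw [add_mul, map_add, map_add, map_add, map_add, add_mul, hx, hy]

lemma transpose_transpose [FiniteDimensional F W] (g : Module.End F W) :
    Module.Dual.transpose (R := F) (Module.Dual.transpose (R := F) g) =
      (Module.evalEquiv F W).conj g := by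
  refine LinearMap.ext fun Φ => LinearMap.ext fun f => ?_
  rw [LinearEquiv.conj_apply_apply]
  simp only [Module.Dual.transpose_apply, LinearMap.comp_apply, Module.evalEquiv_apply,
    Module.Dual.eval_apply]
  rw [← Module.apply_evalEquiv_symm_apply (f := f.comp g)]
  rfl

lemma dd_pt2_pt2 [FiniteDimensional F W] (T : Module.End F V ⊗[F] Module.End F W) :
    ddIdent F V W (pt2 F V (Module.Dual F W) (pt2 F V W T)) = T := by
  induction T using TensorProduct.induction_on with
  | zero => simp
  | tmul f g =>
      rw [pt2_tmul, pt2_tmul, ddIdent, TensorProduct.map_tmul, transpose_transpose]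
      simp
  | add x y hx hy => rw [map_add, map_add, map_add, hx, hy]

end Mod

lemma ring_inv {M : Type*} [MonoidWithZero M] {x y : M} (h1 : x * y = 1) (h2 : y * x = 1) :
    Ring.inverse x = y :=
  Ring.inverse_unit ⟨x, y, h1, h2⟩

end St13
namespace St13

lemma sandwich {M : Type*} [Monoid M] {p q : M} (hpq : p * q = 1) (x : M) :
    p * (q * x * p) * q = x := by
  rw [← mul_assoc p (q * x) p, ← mul_assoc p q x, hpq, one_mul, mul_assoc x p q, hpq,
    mul_one]

end St13
set_option maxHeartbeats 2000000
set_option synthInstance.maxHeartbeats 800000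

/-- `(Ad(D), (R₂₁)⁻¹)` is a twist pair and the inverse of the balance is
a boundary gauge transformation for it. -/
theorem statement13 {F A : Type*} [Field F] [Ring A] [HopfAlgebra F A]
    (hS : Function.Bijective (HopfAlgebra.antipode (R := F) (A := A)))
    (R Ri : A ⊗[F] A) (hQT : IsQT F A R Ri)
    (D Di : A) (hD1 : D * Di = 1) (hD2 : Di * D = 1)
    (hDgl : cop F A D = D ⊗ₜ[F] D) (hDe : Bialgebra.counitAlgHom F A D = 1)
    (hDS : ∀ a : A, D * a * Di =
      HopfAlgebra.antipode (R := F) (HopfAlgebra.antipode (R := F) a))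
    (b bi : A) (hb1 : b * bi = 1) (hb2 : bi * b = 1)
    (hbc : ∀ a : A, b * a = a * b)
    (hΔb : cop F A b = (b ⊗ₜ[F] b) * (flipT F A R * R)) :
    IsTwistPair F A R Ri (flipT F A Ri) (flipT F A R) (conjEquiv F A D Di hD1 hD2) ∧
    IsBoundaryGauge F A R (flipT F A Ri) (conjEquiv F A D Di hD1 hD2) bi b hb2 hb1 := by
  obtain ⟨hRRi, hRiR, hintw, hcopL, hcopR⟩ := hQT
  have hflipRiR : flipT F A Ri * flipT F A R = 1 := by
    rw [← map_mul, hRiR, map_one]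
  have hflipRRi : flipT F A R * flipT F A Ri = 1 := by
    rw [← map_mul, hRRi, map_one]
  -- counit identities
  have hεl : counit2l F A R = 1 := by
    have h := congrArg (St13.kap F A) hcopL
    rw [map_mul, St13.kap_cop12, St13.kap_i13, St13.kap_i23] at h
    have h2 : ((1 : A) ⊗ₜ[F] counit2l F A R : A ⊗[F] A) = 1 := by
      calc ((1 : A) ⊗ₜ[F] counit2l F A R : A ⊗[F] A)
          = ((1 : A) ⊗ₜ[F] counit2l F A R) * (R * Ri) := by rw [hRRi, mul_one]
        _ = (((1 : A) ⊗ₜ[F] counit2l F A R) * R) * Ri := by rw [mul_assoc]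
        _ = R * Ri := by rw [← h]
        _ = 1 := hRRi
    have h3 := congrArg (counit2l F A) h2
    simp only [St13.counit2l_tmul, map_one, one_smul] at h3
    exact h3
  have hεr : counit2r F A R = 1 := by
    have h := congrArg (St13.theta F A) hcopR
    rw [map_mul, St13.theta_cop23, St13.theta_i13, St13.theta_i12] at h
    have h2 : (counit2r F A R ⊗ₜ[F] (1 : A) : A ⊗[F] A) = 1 := by
      calc (counit2r F A R ⊗ₜ[F] (1 : A) : A ⊗[F] A)
          = (counit2r F A R ⊗ₜ[F] (1 : A)) * (R * Ri) := by rw [hRRi, mul_one]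
        _ = ((counit2r F A R ⊗ₜ[F] (1 : A)) * R) * Ri := by rw [mul_assoc]
        _ = R * Ri := by rw [← h]
        _ = 1 := hRRi
    have h3 := congrArg (counit2r F A) h2
    simp only [St13.counit2r_tmul, map_one, one_smul] at h3
    exact h3
  have hεlRi : counit2l F A Ri = 1 := by
    have h := congrArg (counit2l F A) hRRi
    rw [map_mul, map_one, hεl, one_mul] at h
    exact h
  have hεrRi : counit2r F A Ri = 1 := by
    have h := congrArg (counit2r F A) hRiR
    rw [map_mul, map_one, hεr, mul_one] at h
    exact h
  -- intertwiner as a one-sided relation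
  have hcomm : ∀ a : A, R * cop F A a = copOp F A a * R := by
    intro a
    have h : (R * cop F A a * Ri) * R = copOp F A a * R := by rw [hintw a]
    rwa [mul_assoc (R * cop F A a), hRiR, mul_one] at h
  -- Yang-Baxter
  have hP1 : ∀ u : A ⊗[F] A,
      i12 F A R * cop12 F A u = St13.copOp12 F A u * i12 F A R := by
    intro u
    induction u using TensorProduct.induction_on with
    | zero => simp
    | tmul x y =>
        rw [St13.cop12_tmul, St13.copOp12_tmul, St13.i12_eq_assoc, ← map_mul, ← map_mul,
          Algebra.TensorProduct.tmul_mul_tmul, Algebra.TensorProduct.tmul_mul_tmul,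
          hcomm x, St13.copOp_apply, one_mul, mul_one]
    | add x y hx hy => rw [map_add, map_add, mul_add, add_mul, hx, hy]
  have hYBE : i12 F A R * i13 F A R * i23 F A R = i23 F A R * i13 F A R * i12 F A R := by
    calc i12 F A R * i13 F A R * i23 F A R
        = i12 F A R * cop12 F A R := by rw [mul_assoc, ← hcopL]
      _ = St13.copOp12 F A R * i12 F A R := hP1 R
      _ = St13.sw12 F A (cop12 F A R) * i12 F A R := by rw [St13.copOp12_eq]
      _ = St13.sw12 F A (i13 F A R * i23 F A R) * i12 F A R := by rw [hcopL]
      _ = i23 F A R * i13 F A R * i12 F A R := by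
          rw [map_mul, St13.sw12_i13, St13.sw12_i23]
  have hYBE' : i23 F A (flipT F A R) * i13 F A (flipT F A R) * i12 F A (flipT F A R) =
      i12 F A (flipT F A R) * i13 F A (flipT F A R) * i23 F A (flipT F A R) := by
    have h := congrArg (St13.p13 F A) hYBE
    rwa [map_mul, map_mul, map_mul, map_mul, St13.p13_i12, St13.p13_i13,
      St13.p13_i23] at h
  have hT1 : cop12 F A (flipT F A R) =
      i23 F A (flipT F A R) * i13 F A (flipT F A R) := by
    have h := congrArg (St13.sig1 F A) hcopR
    rwa [St13.sig1_cop23, map_mul, St13.sig1_i13, St13.sig1_i12] at h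
  have hT2 : cop23 F A (flipT F A R) =
      i12 F A (flipT F A R) * i13 F A (flipT F A R) := by
    have h := congrArg (St13.sig2 F A) hcopL
    rwa [St13.sig2_cop12, map_mul, St13.sig2_i13, St13.sig2_i23] at h
  -- cocycle
  have hcocycle : i12 F A (flipT F A Ri) * cop12 F A (flipT F A Ri) =
      i23 F A (flipT F A Ri) * cop23 F A (flipT F A Ri) := by
    have hX1 : (i12 F A (flipT F A Ri) * cop12 F A (flipT F A Ri)) *
        (cop12 F A (flipT F A R) * i12 F A (flipT F A R)) = 1 := by
      rw [mul_assoc (i12 F A (flipT F A Ri)), ← mul_assoc (cop12 F A (flipT F A Ri)),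
        ← map_mul, hflipRiR, map_one, one_mul, ← map_mul, hflipRiR, map_one]
    have hX2 : (cop23 F A (flipT F A R) * i23 F A (flipT F A R)) *
        (i23 F A (flipT F A Ri) * cop23 F A (flipT F A Ri)) = 1 := by
      rw [mul_assoc (cop23 F A (flipT F A R)), ← mul_assoc (i23 F A (flipT F A R)),
        ← map_mul, hflipRRi, map_one, one_mul, ← map_mul, hflipRRi, map_one]
    have hmid : cop12 F A (flipT F A R) * i12 F A (flipT F A R) =
        cop23 F A (flipT F A R) * i23 F A (flipT F A R) := by
      rw [hT1, hT2]
      exact hYBE'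
    calc i12 F A (flipT F A Ri) * cop12 F A (flipT F A Ri)
        = (i12 F A (flipT F A Ri) * cop12 F A (flipT F A Ri)) *
            ((cop23 F A (flipT F A R) * i23 F A (flipT F A R)) *
              (i23 F A (flipT F A Ri) * cop23 F A (flipT F A Ri))) := by
          rw [hX2, mul_one]
      _ = (i12 F A (flipT F A Ri) * cop12 F A (flipT F A Ri)) *
            ((cop12 F A (flipT F A R) * i12 F A (flipT F A R)) *
              (i23 F A (flipT F A Ri) * cop23 F A (flipT F A Ri))) := by
          rw [hmid]
      _ = ((i12 F A (flipT F A Ri) * cop12 F A (flipT F A Ri)) *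
            (cop12 F A (flipT F A R) * i12 F A (flipT F A R))) *
              (i23 F A (flipT F A Ri) * cop23 F A (flipT F A Ri)) := by
          rw [← mul_assoc]
      _ = i23 F A (flipT F A Ri) * cop23 F A (flipT F A Ri) := by
          rw [hX1, one_mul]
  -- grouplike inverse
  have hΔDi : cop F A Di = Di ⊗ₜ[F] Di := by
    have h1 : cop F A D * cop F A Di = 1 := by rw [← map_mul, hD1, map_one]
    calc cop F A Di = ((Di ⊗ₜ[F] Di) * (D ⊗ₜ[F] D)) * cop F A Di := by
          rw [Algebra.TensorProduct.tmul_mul_tmul, hD2, ← Algebra.TensorProduct.one_def,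
            one_mul]
      _ = (Di ⊗ₜ[F] Di) * (cop F A D * cop F A Di) := by rw [mul_assoc, ← hDgl]
      _ = Di ⊗ₜ[F] Di := by rw [h1, mul_one]
  have hDDi1 : (D ⊗ₜ[F] D : A ⊗[F] A) * (Di ⊗ₜ[F] Di) = 1 := by
    rw [Algebra.TensorProduct.tmul_mul_tmul, hD1, ← Algebra.TensorProduct.one_def]
  -- intertwiner for the twisted pair
  have hintwJ : ∀ a : A, flipT F A Ri * cop F A a * flipT F A R = copOp F A a := by
    intro a
    have h0 := congrArg (flipT F A) (hintw a)
    rw [map_mul, map_mul, St13.copOp_apply, St13.flipT_flipT] at h0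
    rw [← h0, St13.copOp_apply]
    exact St13.sandwich hflipRiR (flipT F A (cop F A a))
  have hintwT : ∀ a : A,
      mapT F A (conjEquiv F A D Di hD1 hD2).toAlgHom (conjEquiv F A D Di hD1 hD2).toAlgHom
        (copOp F A ((conjEquiv F A D Di hD1 hD2).symm a)) =
      flipT F A Ri * cop F A a * flipT F A R := by
    intro a
    have hsym : (conjEquiv F A D Di hD1 hD2).symm a = Di * a * D := rfl
    have hcop3 : cop F A (Di * a * D) =
        (Di ⊗ₜ[F] Di) * cop F A a * (D ⊗ₜ[F] D) := by
      rw [map_mul, map_mul, hΔDi, hDgl]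
    rw [hintwJ a, St13.mapT_conj, hsym, St13.copOp_apply, hcop3, map_mul, map_mul,
      St13.flipT_tmul, St13.flipT_tmul, St13.copOp_apply]
    exact St13.sandwich hDDi1 (flipT F A (cop F A a))
  -- R-matrix relation
  have hrrel : flipT F A
      (mapT F A (conjEquiv F A D Di hD1 hD2).toAlgHom (conjEquiv F A D Di hD1 hD2).toAlgHom
        R) = flipT F A (flipT F A Ri) * R * flipT F A R := by
    have hDD : R * (D ⊗ₜ[F] D) = (D ⊗ₜ[F] D) * R := by
      have h := hcomm D
      rwa [hDgl, St13.copOp_apply, hDgl, St13.flipT_tmul] at h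
    rw [St13.mapT_conj, ← hDD, mul_assoc R, hDDi1, mul_one, St13.flipT_flipT, hRiR,
      one_mul]
  refine ⟨⟨hflipRiR, hflipRRi, hcocycle, ?_, ?_, hintwT, hrrel⟩, ?_⟩
  · rw [St13.counit2l_flip]
    exact hεrRi
  · rw [St13.counit2r_flip]
    exact hεlRi
  -- boundary gauge
  intro V W _ _ _ _ _ _ ρV ρW
  have hbicomm : ∀ x : A, bi * x = x * bi := by
    intro x
    calc bi * x = bi * x * (b * bi) := by rw [hb1, mul_one]
      _ = bi * (x * b) * bi := by rw [← mul_assoc, mul_assoc bi x b]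
      _ = bi * (b * x) * bi := by rw [← hbc x]
      _ = x * bi := by rw [← mul_assoc, hb2, one_mul]
  have hf : ∀ x : A,
      ((conjEquiv F A D Di hD1 hD2).trans (conjEquiv F A bi b hb2 hb1)).toAlgHom x =
        HopfAlgebra.antipode (R := F) (HopfAlgebra.antipode (R := F) x) := by
    intro x
    show bi * (D * x * Di) * b = _
    rw [hbicomm (D * x * Di), mul_assoc, hb2, mul_one]
    exact hDS x
  have hmapR :
      (Algebra.TensorProduct.map (ρV.comp
        ((conjEquiv F A D Di hD1 hD2).trans (conjEquiv F A bi b hb2 hb1)).toAlgHom) ρW) R =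
      (Algebra.TensorProduct.map ρV ρW) (St13.smap F A (St13.smap F A R)) := by
    rw [St13.map_comp_fst, St13.mapfst_eq_smap_smap F A _ hf R]
  -- antipode identities
  have hSR : St13.smap F A R = Ri := by
    have h := St13.nuMap_cop12 F A R
    rw [hcopL, St13.nuMap_i13_i23, hεl, ← Algebra.TensorProduct.one_def] at h
    calc St13.smap F A R = St13.smap F A R * (R * Ri) := by rw [hRRi, mul_one]
      _ = (St13.smap F A R * R) * Ri := by rw [← mul_assoc]
      _ = Ri := by rw [h, one_mul]
  have hcop12Ri : cop12 F A Ri = i23 F A Ri * i13 F A Ri := by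
    have e2 : cop12 F A R * (i23 F A Ri * i13 F A Ri) = 1 := by
      rw [hcopL, mul_assoc (i13 F A R), ← mul_assoc (i23 F A R), ← map_mul, hRRi,
        map_one, one_mul, ← map_mul, hRRi, map_one]
    calc cop12 F A Ri
        = cop12 F A Ri * (cop12 F A R * (i23 F A Ri * i13 F A Ri)) := by
          rw [e2, mul_one]
      _ = (cop12 F A Ri * cop12 F A R) * (i23 F A Ri * i13 F A Ri) := by
          rw [← mul_assoc]
      _ = i23 F A Ri * i13 F A Ri := by rw [← map_mul, hRiR, map_one, one_mul]
  have hS1 : St13.star2 F A (St13.smap F A (St13.smap F A R)) Ri = 1 := by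
    rw [hSR]
    have h := St13.nuMap_cop12 F A Ri
    rwa [hcop12Ri, St13.nuMap_i23_i13, hεlRi, ← Algebra.TensorProduct.one_def] at h
  have hS2 : St13.star2 F A Ri (St13.smap F A (St13.smap F A R)) = 1 := by
    rw [hSR]
    have h := St13.muMap_cop12 F A Ri
    rwa [hcop12Ri, St13.muMap_i23_i13, hεlRi, ← Algebra.TensorProduct.one_def] at h
  have hXY : pt2 F V W ((Algebra.TensorProduct.map ρV ρW) (St13.smap F A (St13.smap F A R))) *
      pt2 F V W ((Algebra.TensorProduct.map ρV ρW) Ri) = 1 := by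
    rw [St13.pt2_map_mul, hS1, map_one, St13.pt2_one]
  have hYX : pt2 F V W ((Algebra.TensorProduct.map ρV ρW) Ri) *
      pt2 F V W ((Algebra.TensorProduct.map ρV ρW) (St13.smap F A (St13.smap F A R))) = 1 := by
    rw [St13.pt2_map_mul, hS2, map_one, St13.pt2_one]
  have hPP' : (Algebra.TensorProduct.map ρV ρW) Ri * (Algebra.TensorProduct.map ρV ρW) R
      = 1 := by rw [← map_mul, hRiR, map_one]
  have hP'P : (Algebra.TensorProduct.map ρV ρW) R * (Algebra.TensorProduct.map ρV ρW) Ri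
      = 1 := by rw [← map_mul, hRRi, map_one]
  have h2a : pt2 F V (Module.Dual F W) (pt2 F V W ((Algebra.TensorProduct.map ρV ρW) Ri)) *
      pt2 F V (Module.Dual F W) (pt2 F V W ((Algebra.TensorProduct.map ρV ρW) R)) = 1 := by
    rw [← St13.pt2_pt2_mul, hPP', St13.pt2_one, St13.pt2_one]
  have h2b : pt2 F V (Module.Dual F W) (pt2 F V W ((Algebra.TensorProduct.map ρV ρW) R)) *
      pt2 F V (Module.Dual F W) (pt2 F V W ((Algebra.TensorProduct.map ρV ρW) Ri)) = 1 := by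
    rw [← St13.pt2_pt2_mul, hP'P, St13.pt2_one, St13.pt2_one]
  have helem : (bi ⊗ₜ[F] bi) * flipT F A Ri * cop F A b = R := by
    rw [hΔb, mul_assoc, ← mul_assoc (flipT F A Ri), ← St13.central_tmul F A b hbc,
      ← mul_assoc, ← mul_assoc (bi ⊗ₜ[F] bi), Algebra.TensorProduct.tmul_mul_tmul,
      hb2, ← Algebra.TensorProduct.one_def, one_mul, ← mul_assoc, hflipRiR, one_mul]
  have hinv1 : Ring.inverse (pt2 F V W ((Algebra.TensorProduct.map ρV ρW)
        (St13.smap F A (St13.smap F A R)))) =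
      pt2 F V W ((Algebra.TensorProduct.map ρV ρW) Ri) := St13.ring_inv hXY hYX
  have hinv2 : Ring.inverse (pt2 F V (Module.Dual F W)
        (pt2 F V W ((Algebra.TensorProduct.map ρV ρW) Ri))) =
      pt2 F V (Module.Dual F W) (pt2 F V W ((Algebra.TensorProduct.map ρV ρW) R)) :=
    St13.ring_inv h2a h2b
  refine ⟨?_, ?_, ?_⟩
  · rw [hmapR]
    exact ⟨⟨_, _, hXY, hYX⟩, rfl⟩
  · rw [hmapR, hinv1]
    exact ⟨⟨_, _, h2a, h2b⟩, rfl⟩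
  · rw [hmapR, hinv1, hinv2, St13.dd_pt2_pt2, helem]

end
end

section
/- Let A be a quasitriangular bialgebra over a field F with R-matrix R, ψ an algebra automorphism of A, J an invertible element of A⊗A, D an invertible group-like element of A (Δ(D) = D⊗D, ε(D) = 1), and K an invertible element of A with Δ(K) = J⁻¹·(1⊗K)·R^ψ·(K⊗1), where R^ψ = (ψ⊗id)(R). Then the dual K-matrix K̃ := D·K⁻¹ satisfies Δ(K̃) = (K̃⊗1)·((1⊗D)·R^ψ·(1⊗D⁻¹))⁻¹·(1⊗K̃)·J. -/
open TensorProduct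

noncomputable section

variable (F : Type*) [Field F]

/-- the coproduct of the dual K-matrix `K̃ = D ⬝ K⁻¹`:
`Δ(K̃) = (K̃ ⊗ 1) ⬝ ((1 ⊗ D) ⬝ R^ψ ⬝ (1 ⊗ D⁻¹))⁻¹ ⬝ (1 ⊗ K̃) ⬝ J`. -/
theorem statement14 {F A : Type*} [Field F] [Ring A] [Bialgebra F A]
    (R Ri : A ⊗[F] A) (hQT : IsQT F A R Ri)
    (ψ : A ≃ₐ[F] A) (J Ji : A ⊗[F] A) (hJ1 : J * Ji = 1) (hJ2 : Ji * J = 1)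
    (D Di : A) (hD1 : D * Di = 1) (hD2 : Di * D = 1)
    (hDgl : cop F A D = D ⊗ₜ[F] D) (hDe : Bialgebra.counitAlgHom F A D = 1)
    (K Kinv : A) (hK1 : K * Kinv = 1) (hK2 : Kinv * K = 1)
    (hcop : cop F A K = Ji * (((1 : A) ⊗ₜ[F] K) * (rpsi F A R ψ * (K ⊗ₜ[F] (1 : A)))))
    (X : A ⊗[F] A)
    (hX1 : X * (((1 : A) ⊗ₜ[F] D) * rpsi F A R ψ * ((1 : A) ⊗ₜ[F] Di)) = 1)
    (hX2 : (((1 : A) ⊗ₜ[F] D) * rpsi F A R ψ * ((1 : A) ⊗ₜ[F] Di)) * X = 1) :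
    cop F A (D * Kinv) =
      ((D * Kinv) ⊗ₜ[F] (1 : A)) * X * ((1 : A) ⊗ₜ[F] (D * Kinv)) * J := by

  set Rp := rpsi F A R ψ with hRp
  set Rpi := rpsi F A Ri ψ with hRpi
  have hR1 : Rp * Rpi = 1 := by
    rw [hRp, hRpi, rpsi, rpsi, ← map_mul, hQT.mulInv, map_one]
  have hR2 : Rpi * Rp = 1 := by
    rw [hRp, hRpi, rpsi, rpsi, ← map_mul, hQT.invMul, map_one]
  -- identify X
  have hY : (((1 : A) ⊗ₜ[F] D) * Rp * ((1 : A) ⊗ₜ[F] Di)) *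
      (((1 : A) ⊗ₜ[F] D) * Rpi * ((1 : A) ⊗ₜ[F] Di)) = 1 := by
    have : ((1 : A) ⊗ₜ[F] Di) * ((1 : A) ⊗ₜ[F] D) = 1 := by
      rw [Algebra.TensorProduct.tmul_mul_tmul, hD2, one_mul]
      rfl
    calc (((1 : A) ⊗ₜ[F] D) * Rp * ((1 : A) ⊗ₜ[F] Di)) *
        (((1 : A) ⊗ₜ[F] D) * Rpi * ((1 : A) ⊗ₜ[F] Di))
        = ((1 : A) ⊗ₜ[F] D) * Rp * ((((1 : A) ⊗ₜ[F] Di) * ((1 : A) ⊗ₜ[F] D)) *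
            (Rpi * ((1 : A) ⊗ₜ[F] Di))) := by simp only [mul_assoc]
      _ = ((1 : A) ⊗ₜ[F] D) * ((Rp * Rpi) * ((1 : A) ⊗ₜ[F] Di)) := by
            rw [this, one_mul]; simp only [mul_assoc]
      _ = ((1 : A) ⊗ₜ[F] D) * ((1 : A) ⊗ₜ[F] Di) := by rw [hR1, one_mul]
      _ = 1 := by rw [Algebra.TensorProduct.tmul_mul_tmul, hD1, one_mul]; rfl
  have hXeq : X = ((1 : A) ⊗ₜ[F] D) * Rpi * ((1 : A) ⊗ₜ[F] Di) :=
    left_inv_eq_right_inv hX1 hY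
  -- inverse of cop K
  set C := (Kinv ⊗ₜ[F] (1 : A)) * Rpi * ((1 : A) ⊗ₜ[F] Kinv) * J with hC
  have hcop2 : cop F A K * C = 1 := by
    rw [hcop, hC]
    have e1 : (K ⊗ₜ[F] (1 : A)) * (Kinv ⊗ₜ[F] (1 : A)) = 1 := by
      rw [Algebra.TensorProduct.tmul_mul_tmul, hK1, one_mul]; rfl
    have e2 : ((1 : A) ⊗ₜ[F] K) * ((1 : A) ⊗ₜ[F] Kinv) = 1 := by
      rw [Algebra.TensorProduct.tmul_mul_tmul, hK1, one_mul]; rfl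
    calc Ji * (((1 : A) ⊗ₜ[F] K) * (Rp * (K ⊗ₜ[F] (1 : A)))) *
        ((Kinv ⊗ₜ[F] (1 : A)) * Rpi * ((1 : A) ⊗ₜ[F] Kinv) * J)
        = Ji * (((1 : A) ⊗ₜ[F] K) * (Rp * ((K ⊗ₜ[F] (1 : A)) * (Kinv ⊗ₜ[F] (1 : A))) *
            (Rpi * (((1 : A) ⊗ₜ[F] Kinv) * J)))) := by simp only [mul_assoc]
      _ = Ji * (((1 : A) ⊗ₜ[F] K) * ((Rp * Rpi) * (((1 : A) ⊗ₜ[F] Kinv) * J))) := by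
            rw [e1, mul_one]; simp only [mul_assoc]
      _ = Ji * ((((1 : A) ⊗ₜ[F] K) * ((1 : A) ⊗ₜ[F] Kinv)) * J) := by
            rw [hR1, one_mul]; simp only [mul_assoc]
      _ = 1 := by rw [e2, one_mul, hJ2]
  have hcopKinv : cop F A Kinv = C := by
    have h1 : cop F A Kinv * cop F A K = 1 := by
      rw [← map_mul, hK2, map_one]
    exact left_inv_eq_right_inv h1 hcop2
  rw [map_mul, hDgl, hcopKinv, hXeq, hC]
  have e3 : ((D * Kinv) ⊗ₜ[F] (1 : A)) * ((1 : A) ⊗ₜ[F] D) =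
      (D ⊗ₜ[F] D) * (Kinv ⊗ₜ[F] (1 : A)) := by
    rw [Algebra.TensorProduct.tmul_mul_tmul, Algebra.TensorProduct.tmul_mul_tmul]
    rw [mul_one, one_mul, mul_one]
  have e4 : ((1 : A) ⊗ₜ[F] Di) * ((1 : A) ⊗ₜ[F] (D * Kinv)) = (1 : A) ⊗ₜ[F] Kinv := by
    rw [Algebra.TensorProduct.tmul_mul_tmul, mul_one, ← mul_assoc, hD2, one_mul]
  calc D ⊗ₜ[F] D * ((Kinv ⊗ₜ[F] (1 : A)) * Rpi * ((1 : A) ⊗ₜ[F] Kinv) * J)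
      = (D ⊗ₜ[F] D * (Kinv ⊗ₜ[F] (1 : A))) * Rpi *
          (((1 : A) ⊗ₜ[F] Di) * ((1 : A) ⊗ₜ[F] (D * Kinv))) * J := by
        rw [e4]; simp only [mul_assoc]
    _ = ((D * Kinv) ⊗ₜ[F] (1 : A)) * ((1 : A) ⊗ₜ[F] D) * Rpi *
          (((1 : A) ⊗ₜ[F] Di) * ((1 : A) ⊗ₜ[F] (D * Kinv))) * J := by rw [e3]
    _ = ((D * Kinv) ⊗ₜ[F] (1 : A)) * (((1 : A) ⊗ₜ[F] D) * Rpi * ((1 : A) ⊗ₜ[F] Di)) *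
          ((1 : A) ⊗ₜ[F] (D * Kinv)) * J := by simp only [mul_assoc]

end
end

section
/- Let A be a Hopf algebra over a field F with bijective antipode S, quasitriangular with R-matrix R, and with a sovereign element D. Let B and B′ be right coideal subalgebras of A, let (ψ, J, K) be a cylindrical structure on (A, B), and let (ψ, J, K′) be a cylindrical structure on (A, B′) with the same twist pair (ψ, J). Then the generalized dual K-matrix K̃ := D·(K′)⁻¹ is a boundary gauge transformation for (ψ, J). -/
open TensorProduct

noncomputable section

variable (F : Type*) [Field F]

namespace St16Aux

open Coalgebra


variable {F : Type*} [Field F] {A : Type*} [Ring A] [HopfAlgebra F A]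

local notation "εF" => Coalgebra.counit (R := F)
local notation "Sa" => HopfAlgebra.antipode (R := F) (A := A)

lemma sum_counit_smul_right_eq {x : A} {ι : Type*} (r : Coalgebra.Repr F x ι) :
    ∑ i ∈ r.index, εF (r.right i) • r.left i = x := by
  have h := Coalgebra.sum_tmul_counit_eq (R := F) r
  apply_fun (TensorProduct.rid F A) at h
  rw [map_sum] at h
  simpa [TensorProduct.rid_tmul] using h

lemma sum_counit_smul_left_eq {x : A} {ι : Type*} (r : Coalgebra.Repr F x ι) :
    ∑ i ∈ r.index, εF (r.left i) • r.right i = x := by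
  have h := Coalgebra.sum_counit_tmul_eq (R := F) r
  apply_fun (TensorProduct.lid F A) at h
  rw [map_sum] at h
  simpa [TensorProduct.lid_tmul] using h

/-- A representation of `comul (x*y)` built from representations of `x` and `y`. -/
def mulRepr {x y : A} {ι κ : Type*} (rx : Coalgebra.Repr F x ι) (ry : Coalgebra.Repr F y κ) :
    Coalgebra.Repr F (x * y) (ι × κ) where
  index := rx.index ×ˢ ry.index
  left p := rx.left p.1 * ry.left p.2
  right p := rx.right p.1 * ry.right p.2
  eq := by
    have hc : CoalgebraStruct.comul (R := F) (x * y)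
        = CoalgebraStruct.comul (R := F) x * CoalgebraStruct.comul (R := F) y :=
      Bialgebra.comul_mul x y
    rw [Finset.sum_product, hc, ← rx.eq, ← ry.eq, Finset.sum_mul_sum]
    simp [Algebra.TensorProduct.tmul_mul_tmul]

lemma antipode_one' : Sa (1 : A) = 1 := by
  have h := HopfAlgebra.mul_antipode_rTensor_comul_apply (R := F) (A := A) (1 : A)
  rw [Bialgebra.comul_one, Algebra.TensorProduct.one_def] at h
  simpa using h

/-- `p ⊗ (q ⊗ z) ↦ (p ⊗ q) ⊗ op (S z)`. -/
def etaMap : A ⊗[F] (A ⊗[F] A) →ₗ[F] (A ⊗[F] A) ⊗[F] Aᵐᵒᵖ :=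
  (TensorProduct.map LinearMap.id ((MulOpposite.opLinearEquiv F).toLinearMap ∘ₗ Sa)) ∘ₗ
    (TensorProduct.assoc F A A A).symm.toLinearMap

/-- `(x ⊗ y) ⊗ w ↦ (S x * y) * unop w`. -/
def finMap : (A ⊗[F] A) ⊗[F] Aᵐᵒᵖ →ₗ[F] A :=
  LinearMap.mul' F A ∘ₗ TensorProduct.map
    (LinearMap.mul' F A ∘ₗ TensorProduct.map Sa LinearMap.id)
    ((MulOpposite.opLinearEquiv F).symm.toLinearMap)

/-- The bilinear pairing used in the proof of antimultiplicativity. -/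
def lam (x y : A ⊗[F] (A ⊗[F] A)) : A := finMap (etaMap x * etaMap y)

lemma lam_tmul (p q z p' q' z' : A) :
    lam (p ⊗ₜ[F] (q ⊗ₜ[F] z)) (p' ⊗ₜ[F] (q' ⊗ₜ[F] z'))
      = (Sa (p * p') * (q * q')) * (Sa z' * Sa z) := by
  simp only [lam, etaMap, finMap, LinearMap.comp_apply, LinearEquiv.coe_coe,
    TensorProduct.assoc_symm_tmul, TensorProduct.map_tmul, LinearMap.id_coe, id_eq,
    MulOpposite.coe_opLinearEquiv_toLinearMap, Algebra.TensorProduct.tmul_mul_tmul,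
    LinearMap.mul'_apply, MulOpposite.coe_opLinearEquiv, MulOpposite.coe_opLinearEquiv_symm]
  rw [← MulOpposite.op_mul]
  simp

lemma lam_sum {ι κ : Type*} (s : Finset ι) (t : Finset κ)
    (x : ι → A ⊗[F] (A ⊗[F] A)) (y : κ → A ⊗[F] (A ⊗[F] A)) :
    lam (∑ i ∈ s, x i) (∑ j ∈ t, y j) = ∑ i ∈ s, ∑ j ∈ t, lam (x i) (y j) := by
  rw [lam, map_sum, map_sum, Finset.sum_mul_sum]
  simp only [map_sum, lam]

theorem antipode_mul' (a b : A) : Sa (a * b) = Sa b * Sa a := by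
  classical
  let rA := ℛ F a
  let rB := ℛ F b
  let rA1 : ∀ i, Coalgebra.Repr F (rA.left i) (A × A) := fun i => ℛ F (rA.left i)
  let rA2 : ∀ i, Coalgebra.Repr F (rA.right i) (A × A) := fun i => ℛ F (rA.right i)
  let rB1 : ∀ j, Coalgebra.Repr F (rB.left j) (A × A) := fun j => ℛ F (rB.left j)
  let rB2 : ∀ j, Coalgebra.Repr F (rB.right j) (A × A) := fun j => ℛ F (rB.right j)
  have hTa := Coalgebra.sum_tmul_tmul_eq (R := F) rA rA1 rA2
  have hTb := Coalgebra.sum_tmul_tmul_eq (R := F) rB rB1 rB2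
  -- the common middle quantity
  have EA : lam (∑ i ∈ rA.index, ∑ k ∈ (rA2 i).index,
        rA.left i ⊗ₜ[F] ((rA2 i).left k ⊗ₜ[F] (rA2 i).right k))
      (∑ j ∈ rB.index, ∑ l ∈ (rB2 j).index,
        rB.left j ⊗ₜ[F] ((rB2 j).left l ⊗ₜ[F] (rB2 j).right l)) = Sa (a * b) := by
    rw [lam_sum]
    have step : ∀ i ∈ rA.index, ∀ j ∈ rB.index,
        lam (∑ k ∈ (rA2 i).index, rA.left i ⊗ₜ[F] ((rA2 i).left k ⊗ₜ[F] (rA2 i).right k))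
          (∑ l ∈ (rB2 j).index, rB.left j ⊗ₜ[F] ((rB2 j).left l ⊗ₜ[F] (rB2 j).right l))
        = εF (rB.right j) • εF (rA.right i) • Sa (rA.left i * rB.left j) := by
      intro i _ j _
      rw [lam_sum]
      have inner : ∀ k ∈ (rA2 i).index,
          (∑ l ∈ (rB2 j).index,
            lam (rA.left i ⊗ₜ[F] ((rA2 i).left k ⊗ₜ[F] (rA2 i).right k))
              (rB.left j ⊗ₜ[F] ((rB2 j).left l ⊗ₜ[F] (rB2 j).right l)))
          = εF (rB.right j) •
              (Sa (rA.left i * rB.left j) * ((rA2 i).left k * Sa ((rA2 i).right k))) := by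
        intro k _
        have e1 : ∀ l, lam (rA.left i ⊗ₜ[F] ((rA2 i).left k ⊗ₜ[F] (rA2 i).right k))
              (rB.left j ⊗ₜ[F] ((rB2 j).left l ⊗ₜ[F] (rB2 j).right l))
            = Sa (rA.left i * rB.left j) * (rA2 i).left k *
                ((rB2 j).left l * Sa ((rB2 j).right l)) * Sa ((rA2 i).right k) := by
          intro l
          rw [lam_tmul]
          noncomm_ring
        calc (∑ l ∈ (rB2 j).index,
              lam (rA.left i ⊗ₜ[F] ((rA2 i).left k ⊗ₜ[F] (rA2 i).right k))
                (rB.left j ⊗ₜ[F] ((rB2 j).left l ⊗ₜ[F] (rB2 j).right l)))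
            = ∑ l ∈ (rB2 j).index,
                Sa (rA.left i * rB.left j) * (rA2 i).left k *
                  ((rB2 j).left l * Sa ((rB2 j).right l)) * Sa ((rA2 i).right k) :=
              Finset.sum_congr rfl fun l _ => e1 l
          _ = (Sa (rA.left i * rB.left j) * (rA2 i).left k *
                (∑ l ∈ (rB2 j).index, (rB2 j).left l * Sa ((rB2 j).right l))) *
                  Sa ((rA2 i).right k) := by
              rw [← Finset.sum_mul, ← Finset.mul_sum]
          _ = εF (rB.right j) •
              (Sa (rA.left i * rB.left j) * ((rA2 i).left k * Sa ((rA2 i).right k))) := by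
              rw [HopfAlgebra.sum_mul_antipode_eq_algebraMap_counit (rB2 j), ← Algebra.commutes,
                ← Algebra.smul_def, smul_mul_assoc, mul_assoc]
      calc (∑ k ∈ (rA2 i).index, ∑ l ∈ (rB2 j).index,
            lam (rA.left i ⊗ₜ[F] ((rA2 i).left k ⊗ₜ[F] (rA2 i).right k))
              (rB.left j ⊗ₜ[F] ((rB2 j).left l ⊗ₜ[F] (rB2 j).right l)))
          = ∑ k ∈ (rA2 i).index, εF (rB.right j) •
              (Sa (rA.left i * rB.left j) * ((rA2 i).left k * Sa ((rA2 i).right k))) :=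
            Finset.sum_congr rfl inner
        _ = εF (rB.right j) • (Sa (rA.left i * rB.left j) *
              (∑ k ∈ (rA2 i).index, (rA2 i).left k * Sa ((rA2 i).right k))) := by
            rw [← Finset.smul_sum, ← Finset.mul_sum]
        _ = εF (rB.right j) • εF (rA.right i) • Sa (rA.left i * rB.left j) := by
            rw [HopfAlgebra.sum_mul_antipode_eq_algebraMap_counit (rA2 i), ← Algebra.commutes,
              ← Algebra.smul_def]
    calc (∑ i ∈ rA.index, ∑ j ∈ rB.index,
          lam (∑ k ∈ (rA2 i).index, rA.left i ⊗ₜ[F] ((rA2 i).left k ⊗ₜ[F] (rA2 i).right k))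
            (∑ l ∈ (rB2 j).index, rB.left j ⊗ₜ[F] ((rB2 j).left l ⊗ₜ[F] (rB2 j).right l)))
        = ∑ i ∈ rA.index, ∑ j ∈ rB.index,
            εF (rB.right j) • εF (rA.right i) • Sa (rA.left i * rB.left j) :=
          Finset.sum_congr rfl fun i hi => Finset.sum_congr rfl fun j hj => step i hi j hj
      _ = Sa (a * b) := by
          conv_rhs => rw [← sum_counit_smul_right_eq rA, ← sum_counit_smul_right_eq rB]
          rw [Finset.sum_mul_sum, map_sum]
          refine Finset.sum_congr rfl fun i _ => ?_
          rw [map_sum]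
          refine Finset.sum_congr rfl fun j _ => ?_
          rw [smul_mul_assoc, mul_smul_comm, map_smul, map_smul, smul_comm]
  have EB : lam (∑ i ∈ rA.index, ∑ k ∈ (rA1 i).index,
        (rA1 i).left k ⊗ₜ[F] ((rA1 i).right k ⊗ₜ[F] rA.right i))
      (∑ j ∈ rB.index, ∑ l ∈ (rB1 j).index,
        (rB1 j).left l ⊗ₜ[F] ((rB1 j).right l ⊗ₜ[F] rB.right j)) = Sa b * Sa a := by
    rw [lam_sum]
    have step : ∀ i ∈ rA.index, ∀ j ∈ rB.index,
        lam (∑ k ∈ (rA1 i).index, (rA1 i).left k ⊗ₜ[F] ((rA1 i).right k ⊗ₜ[F] rA.right i))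
          (∑ l ∈ (rB1 j).index, (rB1 j).left l ⊗ₜ[F] ((rB1 j).right l ⊗ₜ[F] rB.right j))
        = (εF (rA.left i) * εF (rB.left j)) • (Sa (rB.right j) * Sa (rA.right i)) := by
      intro i _ j _
      rw [lam_sum]
      have e1 : ∀ k l, lam ((rA1 i).left k ⊗ₜ[F] ((rA1 i).right k ⊗ₜ[F] rA.right i))
            ((rB1 j).left l ⊗ₜ[F] ((rB1 j).right l ⊗ₜ[F] rB.right j))
          = (Sa ((rA1 i).left k * (rB1 j).left l) * ((rA1 i).right k * (rB1 j).right l)) *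
              (Sa (rB.right j) * Sa (rA.right i)) := fun k l => lam_tmul _ _ _ _ _ _
      calc (∑ k ∈ (rA1 i).index, ∑ l ∈ (rB1 j).index,
            lam ((rA1 i).left k ⊗ₜ[F] ((rA1 i).right k ⊗ₜ[F] rA.right i))
              ((rB1 j).left l ⊗ₜ[F] ((rB1 j).right l ⊗ₜ[F] rB.right j)))
          = (∑ k ∈ (rA1 i).index, ∑ l ∈ (rB1 j).index,
              Sa ((rA1 i).left k * (rB1 j).left l) * ((rA1 i).right k * (rB1 j).right l)) *
              (Sa (rB.right j) * Sa (rA.right i)) := by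
            rw [Finset.sum_mul]
            refine Finset.sum_congr rfl fun k _ => ?_
            rw [Finset.sum_mul]
            exact Finset.sum_congr rfl fun l _ => e1 k l
        _ = algebraMap F A (εF (rA.left i * rB.left j)) *
              (Sa (rB.right j) * Sa (rA.right i)) := by
            rw [← Finset.sum_product' (f := fun k l =>
              Sa ((rA1 i).left k * (rB1 j).left l) * ((rA1 i).right k * (rB1 j).right l))]
            exact congrArg (· * (Sa (rB.right j) * Sa (rA.right i)))
              (HopfAlgebra.sum_antipode_mul_eq_algebraMap_counit (R := F) (mulRepr (rA1 i) (rB1 j)))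
        _ = (εF (rA.left i) * εF (rB.left j)) • (Sa (rB.right j) * Sa (rA.right i)) := by
            rw [Bialgebra.counit_mul, ← Algebra.smul_def]
    calc (∑ i ∈ rA.index, ∑ j ∈ rB.index,
          lam (∑ k ∈ (rA1 i).index, (rA1 i).left k ⊗ₜ[F] ((rA1 i).right k ⊗ₜ[F] rA.right i))
            (∑ l ∈ (rB1 j).index, (rB1 j).left l ⊗ₜ[F] ((rB1 j).right l ⊗ₜ[F] rB.right j)))
        = ∑ i ∈ rA.index, ∑ j ∈ rB.index,
            (εF (rA.left i) * εF (rB.left j)) • (Sa (rB.right j) * Sa (rA.right i)) :=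
          Finset.sum_congr rfl fun i hi => Finset.sum_congr rfl fun j hj => step i hi j hj
      _ = ∑ j ∈ rB.index, ∑ i ∈ rA.index,
            (εF (rA.left i) * εF (rB.left j)) • (Sa (rB.right j) * Sa (rA.right i)) :=
          Finset.sum_comm
      _ = (∑ j ∈ rB.index, εF (rB.left j) • Sa (rB.right j)) *
            (∑ i ∈ rA.index, εF (rA.left i) • Sa (rA.right i)) := by
          rw [Finset.sum_mul_sum]
          refine Finset.sum_congr rfl fun j _ => Finset.sum_congr rfl fun i _ => ?_
          rw [smul_mul_assoc, mul_smul_comm, smul_smul, mul_comm]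
      _ = Sa b * Sa a := by
          have hb' : (∑ j ∈ rB.index, εF (rB.left j) • Sa (rB.right j)) = Sa b := by
            conv_rhs => rw [← sum_counit_smul_left_eq rB]
            rw [map_sum]
            exact Finset.sum_congr rfl fun j _ => (map_smul _ _ _).symm
          have ha' : (∑ i ∈ rA.index, εF (rA.left i) • Sa (rA.right i)) = Sa a := by
            conv_rhs => rw [← sum_counit_smul_left_eq rA]
            rw [map_sum]
            exact Finset.sum_congr rfl fun i _ => (map_smul _ _ _).symm
          rw [hb', ha']
  rw [← EA, ← hTa, ← hTb, EB]


section QTLemmas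

variable {F : Type*} [Field F] {A : Type*} [Ring A] [HopfAlgebra F A]

local notation "εF" => Coalgebra.counit (R := F)
local notation "Sa" => HopfAlgebra.antipode (R := F) (A := A)

lemma counit2r_tmul (x y : A) : counit2r F A (x ⊗ₜ[F] y) = εF y • x := by
  simp [counit2r, Algebra.TensorProduct.rid_tmul]

lemma counit2r_comul (b : A) : counit2r F A (cop F A b) = b := by
  have hb := sum_counit_smul_right_eq (ℛ F b)
  calc counit2r F A (cop F A b)
      = counit2r F A (∑ i ∈ (ℛ F b).index, (ℛ F b).left i ⊗ₜ[F] (ℛ F b).right i) := by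
        rw [(ℛ F b).eq]; rfl
    _ = b := by rw [map_sum]; simpa [counit2r_tmul] using hb

/-- Multiplying `(id ⊗ f₁) v` by `(id ⊗ f₂) w` in a tensor algebra. -/
lemma genMul {X : Type*} [Ring X] [Algebra F X] (f₁ f₂ : A →ₗ[F] X) (h : A ⊗[F] A →ₗ[F] X)
    (hyp : ∀ x y : A, f₁ x * f₂ y = h (y ⊗ₜ[F] x)) (v w : A ⊗[F] A) :
    (TensorProduct.map LinearMap.id f₁ v) * (TensorProduct.map LinearMap.id f₂ w)
      = TensorProduct.map LinearMap.id h (i13 F A v * i12 F A w) := by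
  induction v using TensorProduct.induction_on with
  | zero => simp
  | add v₁ v₂ h1 h2 => simp only [map_add, add_mul, h1, h2]
  | tmul a b =>
    induction w using TensorProduct.induction_on with
    | zero => simp
    | add w₁ w₂ g1 g2 => simp only [map_add, mul_add, g1, g2]
    | tmul c d =>
      simp only [i13, i12, TensorProduct.map_tmul, Algebra.TensorProduct.map_tmul,
        AlgHom.coe_id, id_eq, LinearMap.id_coe, Algebra.TensorProduct.includeRight_apply,
        Algebra.TensorProduct.includeLeft_apply, Algebra.TensorProduct.tmul_mul_tmul,
        one_mul, mul_one, hyp]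

def hR : A ⊗[F] A →ₗ[F] A := LinearMap.mul' F A ∘ₗ LinearMap.rTensor A Sa

def hL : A ⊗[F] A →ₗ[F] A := LinearMap.mul' F A ∘ₗ LinearMap.lTensor A Sa

lemma hR_tmul (x y : A) : hR (x ⊗ₜ[F] y) = Sa x * y := by
  simp [hR]

lemma hL_tmul (x y : A) : hL (x ⊗ₜ[F] y) = x * Sa y := by
  simp [hL]

lemma mapId_cop23 (h : A ⊗[F] A →ₗ[F] A) (x : A ⊗[F] A) :
    TensorProduct.map LinearMap.id h (cop23 F A x)
      = TensorProduct.map LinearMap.id (h ∘ₗ CoalgebraStruct.comul (R := F)) x := by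
  induction x using TensorProduct.induction_on with
  | zero => simp
  | add u v hu hv => simp only [map_add, hu, hv]
  | tmul a b =>
    simp only [cop23, Algebra.TensorProduct.map_tmul, AlgHom.coe_id, id_eq,
      TensorProduct.map_tmul, LinearMap.id_coe, LinearMap.comp_apply]
    rw [cop, Bialgebra.comulAlgHom_apply]

lemma hR_comul (b : A) : (hR ∘ₗ CoalgebraStruct.comul (R := F)) b = algebraMap F A (εF b) := by
  simpa [hR] using HopfAlgebra.mul_antipode_rTensor_comul_apply (R := F) b

lemma hL_comul (b : A) : (hL ∘ₗ CoalgebraStruct.comul (R := F)) b = algebraMap F A (εF b) := by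
  simpa [hL] using HopfAlgebra.mul_antipode_lTensor_comul_apply (R := F) b

lemma mapId_counitAlg (h : A →ₗ[F] A) (hh : ∀ b : A, h b = algebraMap F A (εF b))
    (x : A ⊗[F] A) :
    TensorProduct.map LinearMap.id h x = (counit2r F A x) ⊗ₜ[F] (1 : A) := by
  induction x using TensorProduct.induction_on with
  | zero => simp
  | add u v hu hv => rw [map_add, map_add, hu, hv, ← TensorProduct.add_tmul]
  | tmul a b =>
    rw [TensorProduct.map_tmul, counit2r_tmul, hh, Algebra.algebraMap_eq_smul_one,
      TensorProduct.tmul_smul, TensorProduct.smul_tmul', LinearMap.id_coe, id_eq]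

variable {R Ri : A ⊗[F] A}

lemma counit2r_R (hQT : IsQT F A R Ri) : counit2r F A R = 1 := by
  have e1 : ∀ x : A ⊗[F] A,
      Algebra.TensorProduct.map (AlgHom.id F A) (counit2r F A) (cop23 F A x) = x := by
    intro x
    induction x using TensorProduct.induction_on with
    | zero => simp
    | add u v hu hv => simp only [map_add, hu, hv]
    | tmul a b =>
      simp only [cop23, Algebra.TensorProduct.map_tmul, AlgHom.coe_id, id_eq]
      rw [counit2r_comul]
  have e2 : ∀ x : A ⊗[F] A,
      Algebra.TensorProduct.map (AlgHom.id F A) (counit2r F A) (i13 F A x)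
        = (counit2r F A x) ⊗ₜ[F] (1 : A) := by
    intro x
    induction x using TensorProduct.induction_on with
    | zero => simp
    | add u v hu hv => rw [map_add, map_add, hu, hv, ← TensorProduct.add_tmul, map_add]
    | tmul a b =>
      simp only [i13, Algebra.TensorProduct.map_tmul, AlgHom.coe_id, id_eq,
        Algebra.TensorProduct.includeRight_apply, counit2r_tmul,
        TensorProduct.tmul_smul, TensorProduct.smul_tmul']
  have e3 : ∀ x : A ⊗[F] A,
      Algebra.TensorProduct.map (AlgHom.id F A) (counit2r F A) (i12 F A x) = x := by
    intro x
    induction x using TensorProduct.induction_on with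
    | zero => simp
    | add u v hu hv => simp only [map_add, hu, hv]
    | tmul a b =>
      simp only [i12, Algebra.TensorProduct.map_tmul, AlgHom.coe_id, id_eq,
        Algebra.TensorProduct.includeLeft_apply, counit2r_tmul, Bialgebra.counit_one,
        one_smul]
  have h := congrArg (Algebra.TensorProduct.map (AlgHom.id F A) (counit2r F A)) hQT.copR
  rw [map_mul, e1, e2, e3] at h
  have h2 : (counit2r F A R) ⊗ₜ[F] (1 : A) = 1 := by
    have h3 := congrArg (· * Ri) h
    simp only [mul_assoc, hQT.mulInv, mul_one] at h3
    exact h3.symm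
  have h4 := congrArg (counit2r F A) h2
  rwa [counit2r_tmul, Bialgebra.counit_one, one_smul, map_one] at h4

lemma wR_one (hQT : IsQT F A R Ri) :
    TensorProduct.map (LinearMap.id : A →ₗ[F] A) hR (i13 F A R * i12 F A R) = 1 := by
  rw [← hQT.copR, mapId_cop23,
    mapId_counitAlg (hR ∘ₗ CoalgebraStruct.comul (R := F)) hR_comul, counit2r_R hQT]
  rfl

lemma wL_one (hQT : IsQT F A R Ri) :
    TensorProduct.map (LinearMap.id : A →ₗ[F] A) hL (i13 F A R * i12 F A R) = 1 := by
  rw [← hQT.copR, mapId_cop23,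
    mapId_counitAlg (hL ∘ₗ CoalgebraStruct.comul (R := F)) hL_comul, counit2r_R hQT]
  rfl

lemma mapId_comp {M N P : Type*} [AddCommGroup M] [Module F M] [AddCommGroup N] [Module F N]
    [AddCommGroup P] [Module F P] (g₂ : N →ₗ[F] P) (g₁ : M →ₗ[F] N) (z : A ⊗[F] M) :
    TensorProduct.map LinearMap.id (g₂ ∘ₗ g₁) z
      = TensorProduct.map LinearMap.id g₂ (TensorProduct.map LinearMap.id g₁ z) := by
  induction z using TensorProduct.induction_on with
  | zero => simp
  | add u v hu hv => simp only [map_add, hu, hv]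
  | tmul a m => simp

lemma xiR_mul_xiS (hQT : IsQT F A R Ri) :
    (TensorProduct.map LinearMap.id (MulOpposite.opLinearEquiv F).toLinearMap R) *
      (TensorProduct.map LinearMap.id ((MulOpposite.opLinearEquiv F).toLinearMap ∘ₗ Sa) R)
      = 1 := by
  rw [genMul (MulOpposite.opLinearEquiv F).toLinearMap
      ((MulOpposite.opLinearEquiv F).toLinearMap ∘ₗ Sa)
      ((MulOpposite.opLinearEquiv F).toLinearMap ∘ₗ hR)
      (fun x y => by
        simp only [LinearMap.comp_apply, MulOpposite.coe_opLinearEquiv_toLinearMap, hR_tmul,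
          ← MulOpposite.op_mul]) R R,
    mapId_comp, wR_one hQT]
  simp [Algebra.TensorProduct.one_def]

lemma xiS_mul_xiR (hQT : IsQT F A R Ri) :
    (TensorProduct.map LinearMap.id ((MulOpposite.opLinearEquiv F).toLinearMap ∘ₗ Sa) R) *
      (TensorProduct.map LinearMap.id (MulOpposite.opLinearEquiv F).toLinearMap R)
      = 1 := by
  rw [genMul ((MulOpposite.opLinearEquiv F).toLinearMap ∘ₗ Sa)
      (MulOpposite.opLinearEquiv F).toLinearMap
      ((MulOpposite.opLinearEquiv F).toLinearMap ∘ₗ hL)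
      (fun x y => by
        simp only [LinearMap.comp_apply, MulOpposite.coe_opLinearEquiv_toLinearMap, hL_tmul,
          ← MulOpposite.op_mul]) R R,
    mapId_comp, wL_one hQT]
  simp [Algebra.TensorProduct.one_def]

lemma uS_mul_u2 (hQT : IsQT F A R Ri) :
    (TensorProduct.map LinearMap.id (Sa : A →ₗ[F] A) R) *
      (TensorProduct.map LinearMap.id ((Sa : A →ₗ[F] A) ∘ₗ Sa) R) = 1 := by
  rw [genMul (Sa : A →ₗ[F] A) ((Sa : A →ₗ[F] A) ∘ₗ Sa) ((Sa : A →ₗ[F] A) ∘ₗ hR)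
      (fun x y => by
        simp only [LinearMap.comp_apply, hR_tmul, antipode_mul']) R R,
    mapId_comp, wR_one hQT]
  simp [Algebra.TensorProduct.one_def, antipode_one']

lemma u2_mul_uS (hQT : IsQT F A R Ri) :
    (TensorProduct.map LinearMap.id ((Sa : A →ₗ[F] A) ∘ₗ Sa) R) *
      (TensorProduct.map LinearMap.id (Sa : A →ₗ[F] A) R) = 1 := by
  rw [genMul ((Sa : A →ₗ[F] A) ∘ₗ Sa) (Sa : A →ₗ[F] A) ((Sa : A →ₗ[F] A) ∘ₗ hL)
      (fun x y => by
        simp only [LinearMap.comp_apply, hL_tmul, antipode_mul']) R R,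
    mapId_comp, wL_one hQT]
  simp [Algebra.TensorProduct.one_def, antipode_one']

end QTLemmas

section ModLemmas

variable {F : Type*} [Field F] {A : Type*} [Ring A] [HopfAlgebra F A]
variable {V W : Type*} [AddCommGroup V] [Module F V] [AddCommGroup W] [Module F W]

/-- The dual representation, as an algebra map on the opposite algebra. -/
def dualRep (ρW : A →ₐ[F] Module.End F W) :
    Aᵐᵒᵖ →ₐ[F] Module.End F (Module.Dual F W) where
  toFun a := Module.Dual.transpose (R := F) (ρW a.unop)
  map_one' := by
    show Module.Dual.transpose (R := F) (ρW (MulOpposite.unop (1 : Aᵐᵒᵖ))) = 1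
    rw [MulOpposite.unop_one, map_one]
    exact LinearMap.ext fun l => rfl
  map_mul' a b := by
    show Module.Dual.transpose (R := F) (ρW (MulOpposite.unop (a * b)))
      = Module.Dual.transpose (R := F) (ρW (MulOpposite.unop a)) *
        Module.Dual.transpose (R := F) (ρW (MulOpposite.unop b))
    rw [MulOpposite.unop_mul, map_mul]
    exact Module.Dual.transpose_comp _ _
  map_zero' := by
    show Module.Dual.transpose (R := F) (ρW (MulOpposite.unop (0 : Aᵐᵒᵖ))) = 0
    simp
  map_add' a b := by
    show Module.Dual.transpose (R := F) (ρW (MulOpposite.unop (a + b)))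
      = Module.Dual.transpose (R := F) (ρW (MulOpposite.unop a)) +
        Module.Dual.transpose (R := F) (ρW (MulOpposite.unop b))
    rw [MulOpposite.unop_add, map_add, map_add]
  commutes' r := by
    show Module.Dual.transpose (R := F) (ρW (MulOpposite.unop (algebraMap F Aᵐᵒᵖ r)))
      = algebraMap F (Module.End F (Module.Dual F W)) r
    rw [MulOpposite.algebraMap_apply, MulOpposite.unop_op, AlgHom.commutes,
      Module.algebraMap_end_eq_smul_id, map_smul, Module.algebraMap_end_eq_smul_id]
    congr 1

/-- The double-dual representation of endomorphisms. -/
def ddAlg : Module.End F W →ₐ[F] Module.End F (Module.Dual F (Module.Dual F W)) where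
  toFun f := Module.Dual.transpose (R := F) (Module.Dual.transpose (R := F) f)
  map_one' := by
    show Module.Dual.transpose (R := F) (Module.Dual.transpose (R := F) (1 : Module.End F W)) = 1
    have h1 : Module.Dual.transpose (R := F) (1 : Module.End F W) = 1 :=
      LinearMap.ext fun l => rfl
    rw [h1]
    exact LinearMap.ext fun l => rfl
  map_mul' f g := by
    show Module.Dual.transpose (R := F) (Module.Dual.transpose (R := F) (f * g))
      = Module.Dual.transpose (R := F) (Module.Dual.transpose (R := F) f) *
        Module.Dual.transpose (R := F) (Module.Dual.transpose (R := F) g)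
    have h1 : Module.Dual.transpose (R := F) (f * g)
        = (Module.Dual.transpose (R := F) g).comp (Module.Dual.transpose (R := F) f) :=
      Module.Dual.transpose_comp _ _
    rw [h1]
    exact Module.Dual.transpose_comp _ _
  map_zero' := by
    show Module.Dual.transpose (R := F) (Module.Dual.transpose (R := F) (0 : Module.End F W)) = 0
    simp
  map_add' f g := by
    show Module.Dual.transpose (R := F) (Module.Dual.transpose (R := F) (f + g))
      = Module.Dual.transpose (R := F) (Module.Dual.transpose (R := F) f) +
        Module.Dual.transpose (R := F) (Module.Dual.transpose (R := F) g)
    rw [map_add, map_add]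
  commutes' r := by
    show Module.Dual.transpose (R := F)
        (Module.Dual.transpose (R := F) (algebraMap F (Module.End F W) r))
      = algebraMap F (Module.End F (Module.Dual F (Module.Dual F W))) r
    rw [Module.algebraMap_end_eq_smul_id, map_smul, map_smul,
      Module.algebraMap_end_eq_smul_id]
    congr 1

lemma conj_symm_tt [FiniteDimensional F W] (f : Module.End F W) :
    (Module.evalEquiv F W).conj.symm
        (Module.Dual.transpose (R := F) (Module.Dual.transpose (R := F) f)) = f := by
  rw [LinearEquiv.symm_apply_eq]
  refine LinearMap.ext fun x => ?_
  obtain ⟨y, rfl⟩ := (Module.evalEquiv F W).surjective x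
  rw [LinearEquiv.conj_apply_apply, (Module.evalEquiv F W).symm_apply_apply]
  refine LinearMap.ext fun φ => ?_
  simp [Module.Dual.transpose_apply, Module.Dual.eval_apply]

set_option synthInstance.maxHeartbeats 1000000 in
lemma pt2_map (σ : A →ₐ[F] Module.End F V) (ρW : A →ₐ[F] Module.End F W) (x : A ⊗[F] A) :
    pt2 F V W ((Algebra.TensorProduct.map σ ρW) x)
      = (Algebra.TensorProduct.map σ (dualRep ρW))
          (TensorProduct.map LinearMap.id (MulOpposite.opLinearEquiv F).toLinearMap x) := by
  induction x using TensorProduct.induction_on with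
  | zero => simp
  | add u v hu hv => simp only [map_add, hu, hv]
  | tmul a b =>
    simp only [Algebra.TensorProduct.map_tmul, TensorProduct.map_tmul, pt2, LinearMap.id_coe,
      id_eq, MulOpposite.coe_opLinearEquiv_toLinearMap]
    rfl

set_option synthInstance.maxHeartbeats 1000000 in
lemma pt2_dd (σ : A →ₐ[F] Module.End F V) (ρW : A →ₐ[F] Module.End F W) (x : A ⊗[F] A) :
    pt2 F V (Module.Dual F W) ((Algebra.TensorProduct.map σ (dualRep ρW))
        (TensorProduct.map LinearMap.id (MulOpposite.opLinearEquiv F).toLinearMap x))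
      = (Algebra.TensorProduct.map (AlgHom.id F (Module.End F V)) ddAlg)
          ((Algebra.TensorProduct.map σ ρW) x) := by
  induction x using TensorProduct.induction_on with
  | zero => simp
  | add u v hu hv => simp only [map_add, hu, hv]
  | tmul a b =>
    simp only [Algebra.TensorProduct.map_tmul, TensorProduct.map_tmul, pt2, LinearMap.id_coe,
      id_eq, MulOpposite.coe_opLinearEquiv_toLinearMap, AlgHom.coe_id]
    rfl

set_option synthInstance.maxHeartbeats 1000000 in
lemma ddIdent_dd [FiniteDimensional F W] (t : Module.End F V ⊗[F] Module.End F W) :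
    ddIdent F V W ((Algebra.TensorProduct.map (AlgHom.id F (Module.End F V)) ddAlg) t) = t := by
  induction t using TensorProduct.induction_on with
  | zero => simp
  | add u v hu hv => simp only [map_add, hu, hv]
  | tmul f k =>
    simp only [Algebra.TensorProduct.map_tmul, ddIdent, TensorProduct.map_tmul,
      AlgHom.coe_id, id_eq, LinearMap.id_coe, LinearEquiv.coe_coe]
    rw [show (ddAlg (F := F) (W := W)) k
        = Module.Dual.transpose (R := F) (Module.Dual.transpose (R := F) k) from rfl,
      conj_symm_tt]

end ModLemmas

end St16Aux

set_option maxHeartbeats 2000000 in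
set_option synthInstance.maxHeartbeats 1000000 in
/-- the generalized dual K-matrix `K̃ = D ⬝ (K′)⁻¹`, built from a second
cylindrical structure with the same twist pair, is a boundary gauge transformation
for `(ψ, J)`. -/
theorem statement16 {F A : Type*} [Field F] [Ring A] [HopfAlgebra F A]
    (hS : Function.Bijective (HopfAlgebra.antipode (R := F) (A := A)))
    (R Ri : A ⊗[F] A) (hQT : IsQT F A R Ri)
    (D Di : A) (hD1 : D * Di = 1) (hD2 : Di * D = 1)
    (hDgl : cop F A D = D ⊗ₜ[F] D) (hDe : Bialgebra.counitAlgHom F A D = 1)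
    (hDS : ∀ a : A, D * a * Di =
      HopfAlgebra.antipode (R := F) (HopfAlgebra.antipode (R := F) a))
    (B B' : Subalgebra F A) (hB : IsRightCoideal F A B) (hB' : IsRightCoideal F A B')
    (J Ji : A ⊗[F] A) (ψ : A ≃ₐ[F] A) (K Kinv K' K'inv : A)
    (hcyl : IsCylindrical F A R Ri B J Ji ψ K Kinv)
    (hcyl' : IsCylindrical F A R Ri B' J Ji ψ K' K'inv) :
    ∀ (h1 : (D * K'inv) * (K' * Di) = 1) (h2 : (K' * Di) * (D * K'inv) = 1),
      IsBoundaryGauge F A R J ψ (D * K'inv) (K' * Di) h1 h2 := by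
  intro h1 h2
  intro V W _iV _mV _fV _iW _mW _fW ρV ρW
  intro X
  have hQT' := hQT
  -- names
  let Sa : A →ₗ[F] A := HopfAlgebra.antipode (R := F)
  let Op : A →ₗ[F] Aᵐᵒᵖ := (MulOpposite.opLinearEquiv F).toLinearMap
  let σ' : A →ₐ[F] Module.End F V :=
    ρV.comp ((ψ.trans (conjEquiv F A (D * K'inv) (K' * Di) h1 h2)).toAlgHom)
  let ΦT : (A ⊗[F] Aᵐᵒᵖ) →ₐ[F]
      (Module.End F V ⊗[F] Module.End F (Module.Dual F W)) :=
    Algebra.TensorProduct.map σ' (St16Aux.dualRep ρW)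
  let ΦS : (A ⊗[F] A) →ₐ[F] (Module.End F V ⊗[F] Module.End F W) :=
    Algebra.TensorProduct.map σ' ρW
  let G : (Module.End F V ⊗[F] Module.End F W) →ₐ[F]
      (Module.End F V ⊗[F] Module.End F (Module.Dual F (Module.Dual F W))) :=
    Algebra.TensorProduct.map (AlgHom.id F (Module.End F V)) St16Aux.ddAlg
  let ξR : A ⊗[F] Aᵐᵒᵖ := TensorProduct.map LinearMap.id Op R
  let ξuS : A ⊗[F] Aᵐᵒᵖ := TensorProduct.map LinearMap.id (Op ∘ₗ Sa) R
  let uS : A ⊗[F] A := TensorProduct.map LinearMap.id Sa R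
  let u2 : A ⊗[F] A := TensorProduct.map LinearMap.id (Sa ∘ₗ Sa) R
  have q1 : ξR * ξuS = 1 := St16Aux.xiR_mul_xiS hQT
  have q2 : ξuS * ξR = 1 := St16Aux.xiS_mul_xiR hQT
  have q3 : uS * u2 = 1 := St16Aux.uS_mul_u2 hQT
  have q4 : u2 * uS = 1 := St16Aux.u2_mul_uS hQT
  have hX : X = ΦT ξR := St16Aux.pt2_map σ' ρW R
  have hu1 : ΦT ξR * ΦT ξuS = 1 := by rw [← map_mul, q1, map_one]
  have hu2 : ΦT ξuS * ΦT ξR = 1 := by rw [← map_mul, q2, map_one]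
  have hRinv : Ring.inverse X = ΦT ξuS := by
    rw [hX]
    exact Ring.inverse_unit ⟨ΦT ξR, ΦT ξuS, hu1, hu2⟩
  have hcomp : ξuS = TensorProduct.map LinearMap.id Op uS := St16Aux.mapId_comp Op Sa R
  have hpt2 : pt2 F V (Module.Dual F W) (Ring.inverse X) = G (ΦS uS) := by
    rw [hRinv]
    show pt2 F V (Module.Dual F W) (ΦT ξuS) = G (ΦS uS)
    rw [hcomp]
    exact St16Aux.pt2_dd σ' ρW uS
  have hP : ΦS uS * ΦS u2 = 1 := by rw [← map_mul, q3, map_one]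
  have hP' : ΦS u2 * ΦS uS = 1 := by rw [← map_mul, q4, map_one]
  have hGP : G (ΦS uS) * G (ΦS u2) = 1 := by rw [← map_mul, hP, map_one]
  have hGP' : G (ΦS u2) * G (ΦS uS) = 1 := by rw [← map_mul, hP', map_one]
  refine ⟨?_, ?_, ?_⟩
  · rw [hX]
    exact ⟨⟨ΦT ξR, ΦT ξuS, hu1, hu2⟩, rfl⟩
  · rw [hpt2]
    exact ⟨⟨G (ΦS uS), G (ΦS u2), hGP, hGP'⟩, rfl⟩
  · have hRinv2 : Ring.inverse (pt2 F V (Module.Dual F W) (Ring.inverse X)) = G (ΦS u2) := by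
      rw [hpt2]
      exact Ring.inverse_unit ⟨G (ΦS uS), G (ΦS u2), hGP, hGP'⟩
    rw [hRinv2, St16Aux.ddIdent_dd]
    -- Part A : the coproduct computation
    have hDD : cop F A Di = Di ⊗ₜ[F] Di := by
      have h5 : (D ⊗ₜ[F] D) * cop F A Di = 1 := by
        rw [← hDgl, ← map_mul, hD1, map_one]
      have h6 : (Di ⊗ₜ[F] Di) * (D ⊗ₜ[F] D) = 1 := by
        rw [Algebra.TensorProduct.tmul_mul_tmul, hD2, Algebra.TensorProduct.one_def]
      calc cop F A Di = ((Di ⊗ₜ[F] Di) * (D ⊗ₜ[F] D)) * cop F A Di := by rw [h6, one_mul]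
        _ = (Di ⊗ₜ[F] Di) * ((D ⊗ₜ[F] D) * cop F A Di) := mul_assoc _ _ _
        _ = Di ⊗ₜ[F] Di := by rw [h5, mul_one]
    have step3 : ((D * K'inv) ⊗ₜ[F] (D * K'inv)) * ((1 : A) ⊗ₜ[F] K')
        = (D * K'inv) ⊗ₜ[F] D := by
      rw [Algebra.TensorProduct.tmul_mul_tmul, mul_one, mul_assoc, hcyl'.kInvMul, mul_one]
    have step4 : (K' ⊗ₜ[F] (1 : A)) * (Di ⊗ₜ[F] Di) = (K' * Di) ⊗ₜ[F] Di := by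
      rw [Algebra.TensorProduct.tmul_mul_tmul, one_mul]
    have hA1 : ((D * K'inv) ⊗ₜ[F] (D * K'inv)) * J * cop F A (K' * Di)
        = ((D * K'inv) ⊗ₜ[F] D) * rpsi F A R ψ * ((K' * Di) ⊗ₜ[F] Di) := by
      rw [map_mul, hcyl'.copK, hDD]
      calc ((D * K'inv) ⊗ₜ[F] (D * K'inv)) * J *
            (Ji * (((1 : A) ⊗ₜ[F] K') * (rpsi F A R ψ * (K' ⊗ₜ[F] (1 : A)))) * (Di ⊗ₜ[F] Di))
          = ((D * K'inv) ⊗ₜ[F] (D * K'inv)) * (J * Ji) *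
            (((1 : A) ⊗ₜ[F] K') * (rpsi F A R ψ * (K' ⊗ₜ[F] (1 : A))) * (Di ⊗ₜ[F] Di)) := by
            simp only [mul_assoc]
        _ = ((D * K'inv) ⊗ₜ[F] (D * K'inv)) *
            (((1 : A) ⊗ₜ[F] K') * (rpsi F A R ψ * (K' ⊗ₜ[F] (1 : A))) * (Di ⊗ₜ[F] Di)) := by
            rw [hcyl'.twist.mulInv, mul_one]
        _ = (((D * K'inv) ⊗ₜ[F] (D * K'inv)) * ((1 : A) ⊗ₜ[F] K')) * rpsi F A R ψ *
            ((K' ⊗ₜ[F] (1 : A)) * (Di ⊗ₜ[F] Di)) := by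
            simp only [mul_assoc]
        _ = ((D * K'inv) ⊗ₜ[F] D) * rpsi F A R ψ * ((K' * Di) ⊗ₜ[F] Di) := by
            rw [step3, step4]
    have hA2 : ∀ x : A ⊗[F] A,
        (Algebra.TensorProduct.map ρV ρW)
          (((D * K'inv) ⊗ₜ[F] D) *
            (Algebra.TensorProduct.map ψ.toAlgHom (AlgHom.id F A) x) * ((K' * Di) ⊗ₜ[F] Di))
          = ΦS (TensorProduct.map LinearMap.id (Sa ∘ₗ Sa) x) := by
      intro x
      induction x using TensorProduct.induction_on with
      | zero => simp
      | add u v hu hv => simp only [map_add, mul_add, add_mul, hu, hv]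
      | tmul a b =>
        simp only [Algebra.TensorProduct.map_tmul, TensorProduct.map_tmul,
          Algebra.TensorProduct.tmul_mul_tmul, AlgHom.coe_id, id_eq, LinearMap.id_coe,
          LinearMap.comp_apply]
        rw [show (D * b) * Di = D * b * Di from rfl, hDS b]
        rfl
    rw [hA1]
    exact hA2 R


end
end

section
/- Let A be a quasitriangular bialgebra over a field F with R-matrix R and let h be a half-balance, i.e. an invertible element of A with Δ(h) = (h⊗h)·R and h² central. Then (Ad(h), 1⊗1, h) is a cylindrical structure on (A, A), where Ad(h)(a) = h·a·h⁻¹. -/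
open TensorProduct

noncomputable section

variable (F : Type*) [Field F]

section Aux

variable {F A : Type*} [Field F] [Ring A] [Bialgebra F A]

lemma conjEquiv_apply (g gi : A) (h1 : g * gi = 1) (h2 : gi * g = 1) (a : A) :
    conjEquiv F A g gi h1 h2 a = g * a * gi := rfl

lemma conjEquiv_symm_apply (g gi : A) (h1 : g * gi = 1) (h2 : gi * g = 1) (a : A) :
    (conjEquiv F A g gi h1 h2).symm a = gi * a * g := rfl

lemma mapT_conj_conj (g gi k ki : A) (hg1 : g * gi = 1) (hg2 : gi * g = 1)
    (hk1 : k * ki = 1) (hk2 : ki * k = 1) (x : A ⊗[F] A) :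
    mapT F A (conjEquiv F A g gi hg1 hg2).toAlgHom (conjEquiv F A k ki hk1 hk2).toAlgHom x
      = (g ⊗ₜ[F] k) * x * (gi ⊗ₜ[F] ki) := by
  induction x using TensorProduct.induction_on with
  | zero => simp
  | tmul a b =>
      simp only [mapT, Algebra.TensorProduct.map_tmul, AlgEquiv.toAlgHom_eq_coe,
        AlgHom.coe_coe, conjEquiv_apply, Algebra.TensorProduct.tmul_mul_tmul]
      rfl
  | add x y hx hy => simp only [map_add, hx, hy, mul_add, add_mul]

lemma mapT_conj_id (g gi : A) (hg1 : g * gi = 1) (hg2 : gi * g = 1) (x : A ⊗[F] A) :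
    Algebra.TensorProduct.map (conjEquiv F A g gi hg1 hg2).toAlgHom (AlgHom.id F A) x
      = (g ⊗ₜ[F] (1 : A)) * x * (gi ⊗ₜ[F] (1 : A)) := by
  induction x using TensorProduct.induction_on with
  | zero => simp
  | tmul a b =>
      simp only [Algebra.TensorProduct.map_tmul, AlgEquiv.toAlgHom_eq_coe,
        AlgHom.coe_coe, conjEquiv_apply, AlgHom.coe_id, id_eq,
        Algebra.TensorProduct.tmul_mul_tmul, one_mul, mul_one]
      rfl
  | add x y hx hy => simp only [map_add, hx, hy, mul_add, add_mul]

lemma mem_legSpan_top (x : A ⊗[F] A) :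
    x ∈ legSpan F A ((⊤ : Subalgebra F A) : Set A) := by
  induction x using TensorProduct.induction_on with
  | zero => exact Submodule.zero_mem _
  | tmul b a => exact Submodule.subset_span ⟨b, trivial, a, rfl⟩
  | add x y hx hy => exact Submodule.add_mem _ hx hy

end Aux

/-- a half-balance `h` gives the cylindrical structure `(Ad(h), 1 ⊗ 1, h)`
on `(A, A)`. -/
theorem statement18 {F A : Type*} [Field F] [Ring A] [Bialgebra F A]
    (R Ri : A ⊗[F] A) (hQT : IsQT F A R Ri)
    (h hi : A) (hh1 : h * hi = 1) (hh2 : hi * h = 1)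
    (hΔh : cop F A h = (h ⊗ₜ[F] h) * R)
    (hc : ∀ a : A, h * h * a = a * (h * h)) :
    IsCylindrical F A R Ri ⊤ 1 1 (conjEquiv F A h hi hh1 hh2) h hi := by
  set ψ := conjEquiv F A h hi hh1 hh2 with hψdef
  set c : A ⊗[F] A := h ⊗ₜ[F] h with hcdef
  set ci : A ⊗[F] A := hi ⊗ₜ[F] hi with hcidef
  have hcci : c * ci = 1 := by
    simp [hcdef, hcidef, Algebra.TensorProduct.tmul_mul_tmul, hh1,
      Algebra.TensorProduct.one_def]
  have hcic : ci * c = 1 := by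
    simp [hcdef, hcidef, Algebra.TensorProduct.tmul_mul_tmul, hh2,
      Algebra.TensorProduct.one_def]
  have hflipc : flipT F A c = c := by
    simp [hcdef, flipT, Algebra.TensorProduct.comm_tmul]
  have hflipci : flipT F A ci = ci := by
    simp [hcidef, flipT, Algebra.TensorProduct.comm_tmul]
  -- the coproduct of hi
  have hΔhi : cop F A hi = Ri * ci := by
    have h1 : cop F A hi * cop F A h = 1 := by
      rw [← map_mul, hh2, map_one]
    have h2 : cop F A h * (Ri * ci) = 1 := by
      rw [hΔh, mul_assoc, ← mul_assoc R, hQT.mulInv, one_mul, hcci]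
    calc cop F A hi = cop F A hi * (cop F A h * (Ri * ci)) := by rw [h2, mul_one]
      _ = (cop F A hi * cop F A h) * (Ri * ci) := by rw [mul_assoc]
      _ = Ri * ci := by rw [h1, one_mul]
  -- key commutation identities
  have hRc : R * c = c * flipT F A R := by
    have := hQT.intw h
    rw [hΔh] at this
    -- R * (c * R) * Ri = copOp h
    have hop : copOp F A h = c * flipT F A R := by
      show flipT F A (cop F A h) = _
      rw [hΔh, map_mul, hflipc]
    rw [hop] at this
    calc R * c = R * c * (R * Ri) := by rw [hQT.mulInv, mul_one]
      _ = R * (c * R) * Ri := by noncomm_ring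
      _ = c * flipT F A R := this
  have hRfici : flipT F A Ri * ci = ci * Ri := by
    have := hQT.intw hi
    rw [hΔhi] at this
    have hop : copOp F A hi = flipT F A Ri * ci := by
      show flipT F A (cop F A hi) = _
      rw [hΔhi, map_mul, hflipci]
    rw [hop] at this
    calc flipT F A Ri * ci = R * (Ri * ci) * Ri := by rw [← this]
      _ = (R * Ri) * (ci * Ri) := by noncomm_ring
      _ = ci * Ri := by rw [hQT.mulInv, one_mul]
  have hmap : ∀ x : A ⊗[F] A,
      mapT F A ψ.toAlgHom ψ.toAlgHom x = c * x * ci :=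
    fun x => mapT_conj_conj h hi h hi hh1 hh2 hh1 hh2 x
  refine
    { twist :=
      { mulInv := one_mul 1
        invMul := one_mul 1
        cocycle := by simp only [map_one]
        counitL := by simp only [map_one]
        counitR := by simp only [map_one]
        intw := ?_
        rrel := ?_ }
      kMulInv := hh1
      kInvMul := hh2
      intwB := fun b _ => rfl
      support := mem_legSpan_top _
      copK := ?_ }
  · -- intw
    intro a
    rw [hmap]
    have hsymm : ψ.symm a = hi * a * h := rfl
    have hcopOp : copOp F A (ψ.symm a)
        = (flipT F A Ri * ci) * copOp F A a * (c * flipT F A R) := by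
      rw [hsymm]
      have : copOp F A (hi * a * h) = copOp F A hi * copOp F A a * copOp F A h := by
        rw [map_mul, map_mul]
      rw [this]
      congr 1
      · congr 1
        show flipT F A (cop F A hi) = _
        rw [hΔhi, map_mul, hflipci]
      · show flipT F A (cop F A h) = _
        rw [hΔh, map_mul, hflipc]
    rw [hcopOp]
    calc c * ((flipT F A Ri * ci) * copOp F A a * (c * flipT F A R)) * ci
        = (c * (ci * Ri)) * copOp F A a * ((R * c) * ci) := by
          rw [hRfici, ← hRc]; noncomm_ring
      _ = Ri * copOp F A a * R := by
          rw [← mul_assoc c ci, hcci, one_mul, mul_assoc R, hcci, mul_one]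
      _ = Ri * (R * cop F A a * Ri) * R := by rw [hQT.intw]
      _ = (Ri * R) * cop F A a * (Ri * R) := by noncomm_ring
      _ = 1 * cop F A a * 1 := by rw [hQT.invMul]
  · -- rrel
    rw [hmap]
    calc flipT F A (c * R * ci)
        = c * flipT F A R * ci := by rw [map_mul, map_mul, hflipc, hflipci]
      _ = R * (c * ci) := by rw [← hRc, mul_assoc]
      _ = R := by rw [hcci, mul_one]
      _ = flipT F A 1 * R * 1 := by rw [map_one, one_mul, mul_one]
  · -- copK
    have hrpsi : rpsi F A R ψ = (h ⊗ₜ[F] (1 : A)) * R * (hi ⊗ₜ[F] (1 : A)) :=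
      mapT_conj_id h hi hh1 hh2 R
    rw [hΔh, hrpsi, one_mul]
    calc c * R
        = ((1 : A) ⊗ₜ[F] h) * ((h ⊗ₜ[F] (1 : A)) * R) := by
          rw [← mul_assoc, Algebra.TensorProduct.tmul_mul_tmul, one_mul, mul_one]
      _ = ((1 : A) ⊗ₜ[F] h) * ((h ⊗ₜ[F] (1 : A)) * R
            * ((hi ⊗ₜ[F] (1 : A)) * (h ⊗ₜ[F] (1 : A)))) := by
          rw [Algebra.TensorProduct.tmul_mul_tmul, hh2, one_mul,
            ← Algebra.TensorProduct.one_def, mul_one]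
      _ = ((1 : A) ⊗ₜ[F] h) * ((h ⊗ₜ[F] (1 : A)) * R * (hi ⊗ₜ[F] (1 : A))
            * (h ⊗ₜ[F] (1 : A))) := by noncomm_ring

end
end

section
/- Let A be a quasitriangular bialgebra over a field F with R-matrix R and let υ be a bialgebra automorphism of A such that (υ⊗υ)(R) = R (an automorphism of quasitriangular bialgebras). Then both (υ, R) and (υ, (R₂₁)⁻¹) are twist pairs for A. -/
open TensorProduct

noncomputable section

variable (F : Type*) [Field F]

section Aux

variable {F A : Type*} [Field F] [Ring A] [Bialgebra F A]

lemma flipT_tmul (a b : A) : flipT F A (a ⊗ₜ[F] b) = b ⊗ₜ[F] a := rfl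

lemma flipT_flipT (x : A ⊗[F] A) : flipT F A (flipT F A x) = x := by
  induction x using TensorProduct.induction_on with
  | zero => simp
  | tmul a b => rfl
  | add x y hx hy => rw [map_add, map_add, hx, hy]

lemma i12_apply (x : A ⊗[F] A) :
    i12 F A x = Algebra.TensorProduct.assoc F F F A A A (x ⊗ₜ[F] (1 : A)) := by
  induction x using TensorProduct.induction_on with
  | zero => simp [i12]
  | tmul a b => simp [i12, Algebra.TensorProduct.assoc_tmul]
  | add x y hx hy => rw [map_add, hx, hy, ← map_add, ← TensorProduct.add_tmul]

lemma i13_tmul (a b : A) : i13 F A (a ⊗ₜ[F] b) = a ⊗ₜ[F] ((1:A) ⊗ₜ[F] b) := by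
  simp [i13]

lemma i12_tmul (a b : A) : i12 F A (a ⊗ₜ[F] b) = a ⊗ₜ[F] (b ⊗ₜ[F] (1:A)) := by
  simp [i12]

lemma i23_apply (x : A ⊗[F] A) : i23 F A x = (1:A) ⊗ₜ[F] x := rfl

lemma cop12_tmul (a b : A) :
    cop12 F A (a ⊗ₜ[F] b) =
      Algebra.TensorProduct.assoc F F F A A A ((cop F A a) ⊗ₜ[F] b) := by
  simp [cop12]

lemma cop23_tmul (a b : A) : cop23 F A (a ⊗ₜ[F] b) = a ⊗ₜ[F] (cop F A b) := by
  simp [cop23]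

/-- swap of legs 1,2 in the triple tensor product -/
def sw12 : (A ⊗[F] (A ⊗[F] A)) ≃ₐ[F] (A ⊗[F] (A ⊗[F] A)) :=
  (Algebra.TensorProduct.assoc F F F A A A).symm.trans
    ((Algebra.TensorProduct.congr (flipT F A) AlgEquiv.refl).trans
      (Algebra.TensorProduct.assoc F F F A A A))

/-- swap of legs 1,3 in the triple tensor product -/
def t13 : (A ⊗[F] (A ⊗[F] A)) ≃ₐ[F] (A ⊗[F] (A ⊗[F] A)) :=
  (Algebra.TensorProduct.comm F A (A ⊗[F] A)).trans
    ((Algebra.TensorProduct.congr (flipT F A) AlgEquiv.refl).trans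
      (Algebra.TensorProduct.assoc F F F A A A))

/-- swap of legs 2,3 in the triple tensor product -/
def rho : (A ⊗[F] (A ⊗[F] A)) ≃ₐ[F] (A ⊗[F] (A ⊗[F] A)) :=
  Algebra.TensorProduct.congr AlgEquiv.refl (flipT F A)

lemma sw12_tmul (a c d : A) :
    sw12 (a ⊗ₜ[F] (c ⊗ₜ[F] d)) = c ⊗ₜ[F] (a ⊗ₜ[F] d) := by
  simp [sw12, Algebra.TensorProduct.assoc_symm_tmul, Algebra.TensorProduct.congr,
    Algebra.TensorProduct.assoc_tmul, flipT]

lemma t13_tmul3 (a c d : A) :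
    t13 (a ⊗ₜ[F] (c ⊗ₜ[F] d)) = d ⊗ₜ[F] (c ⊗ₜ[F] a) := by
  simp [t13, Algebra.TensorProduct.comm_tmul, Algebra.TensorProduct.congr,
    Algebra.TensorProduct.assoc_tmul, flipT]

lemma rho_tmul3 (a c d : A) :
    rho (a ⊗ₜ[F] (c ⊗ₜ[F] d)) = a ⊗ₜ[F] (d ⊗ₜ[F] c) := by
  simp [rho, Algebra.TensorProduct.congr, flipT]

lemma sw12_assoc (Y : A ⊗[F] A) (a : A) :
    sw12 (Algebra.TensorProduct.assoc F F F A A A (Y ⊗ₜ[F] a)) =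
      Algebra.TensorProduct.assoc F F F A A A ((flipT F A Y) ⊗ₜ[F] a) := by
  induction Y using TensorProduct.induction_on with
  | zero => simp
  | tmul c d => rw [Algebra.TensorProduct.assoc_tmul, sw12_tmul, flipT_tmul,
      Algebra.TensorProduct.assoc_tmul]
  | add x y hx hy => rw [TensorProduct.add_tmul, map_add, map_add, hx, hy, map_add,
      TensorProduct.add_tmul, map_add]

lemma t13_tmulY (b : A) (Y : A ⊗[F] A) :
    t13 (b ⊗ₜ[F] Y) =
      Algebra.TensorProduct.assoc F F F A A A ((flipT F A Y) ⊗ₜ[F] b) := by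
  induction Y using TensorProduct.induction_on with
  | zero => simp [TensorProduct.tmul_zero]
  | tmul c d => rw [t13_tmul3, flipT_tmul, Algebra.TensorProduct.assoc_tmul]
  | add x y hx hy => rw [TensorProduct.tmul_add, map_add, hx, hy, map_add,
      TensorProduct.add_tmul, map_add]

lemma t13_assoc (Y : A ⊗[F] A) (a : A) :
    t13 (Algebra.TensorProduct.assoc F F F A A A (Y ⊗ₜ[F] a)) = a ⊗ₜ[F] (flipT F A Y) := by
  induction Y using TensorProduct.induction_on with
  | zero => simp
  | tmul c d => rw [Algebra.TensorProduct.assoc_tmul, t13_tmul3, flipT_tmul]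
  | add x y hx hy => rw [TensorProduct.add_tmul, map_add, map_add, hx, hy, map_add,
      TensorProduct.tmul_add]

lemma rho_tmulY (a : A) (Y : A ⊗[F] A) : rho (a ⊗ₜ[F] Y) = a ⊗ₜ[F] (flipT F A Y) := by
  induction Y using TensorProduct.induction_on with
  | zero => simp [TensorProduct.tmul_zero]
  | tmul c d => rw [rho_tmul3, flipT_tmul]
  | add x y hx hy => rw [TensorProduct.tmul_add, map_add, hx, hy, map_add,
      TensorProduct.tmul_add]

lemma sw12_i13 (x : A ⊗[F] A) : sw12 (i13 F A x) = i23 F A x := by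
  induction x using TensorProduct.induction_on with
  | zero => simp
  | tmul a b => rw [i13_tmul, sw12_tmul, i23_apply]
  | add x y hx hy => rw [map_add, map_add, hx, hy, map_add]

lemma sw12_i23 (x : A ⊗[F] A) : sw12 (i23 F A x) = i13 F A x := by
  induction x using TensorProduct.induction_on with
  | zero => simp
  | tmul a b => rw [i23_apply, sw12_tmul, i13_tmul]
  | add x y hx hy => rw [map_add, map_add, hx, hy, map_add]

lemma t13_i13 (x : A ⊗[F] A) : t13 (i13 F A x) = i13 F A (flipT F A x) := by
  induction x using TensorProduct.induction_on with
  | zero => simp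
  | tmul a b => rw [i13_tmul, t13_tmul3, flipT_tmul, i13_tmul]
  | add x y hx hy => rw [map_add, map_add, hx, hy, map_add, map_add]

lemma t13_i12 (x : A ⊗[F] A) : t13 (i12 F A x) = i23 F A (flipT F A x) := by
  induction x using TensorProduct.induction_on with
  | zero => simp
  | tmul a b => rw [i12_tmul, t13_tmul3, flipT_tmul, i23_apply]
  | add x y hx hy => rw [map_add, map_add, hx, hy, map_add, map_add]

lemma t13_i23 (x : A ⊗[F] A) : t13 (i23 F A x) = i12 F A (flipT F A x) := by
  induction x using TensorProduct.induction_on with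
  | zero => simp
  | tmul a b => rw [i23_apply, t13_tmul3, flipT_tmul, i12_tmul]
  | add x y hx hy => rw [map_add, map_add, hx, hy, map_add, map_add]

lemma rho_i13 (x : A ⊗[F] A) : rho (i13 F A x) = i12 F A x := by
  induction x using TensorProduct.induction_on with
  | zero => simp
  | tmul a b => rw [i13_tmul, rho_tmul3, i12_tmul]
  | add x y hx hy => rw [map_add, map_add, hx, hy, map_add]

lemma rho_i12 (x : A ⊗[F] A) : rho (i12 F A x) = i13 F A x := by
  induction x using TensorProduct.induction_on with
  | zero => simp
  | tmul a b => rw [i12_tmul, rho_tmul3, i13_tmul]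
  | add x y hx hy => rw [map_add, map_add, hx, hy, map_add]

lemma copOp_eq (a : A) : copOp F A a = flipT F A (cop F A a) := rfl

lemma conj12 {R Ri : A ⊗[F] A} (hQT : IsQT F A R Ri) (x : A ⊗[F] A) :
    i12 F A R * cop12 F A x * i12 F A Ri = sw12 (cop12 F A x) := by
  induction x using TensorProduct.induction_on with
  | zero => simp
  | tmul b a =>
      rw [cop12_tmul, sw12_assoc, i12_apply R, i12_apply Ri, ← map_mul, ← map_mul,
        Algebra.TensorProduct.tmul_mul_tmul, Algebra.TensorProduct.tmul_mul_tmul,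
        one_mul, mul_one, hQT.intw, copOp_eq]
  | add x y hx hy =>
      rw [map_add, mul_add, add_mul, hx, hy, map_add]

lemma cop12_flip (x : A ⊗[F] A) :
    cop12 F A (flipT F A x) = sw12 (t13 (cop23 F A x)) := by
  induction x using TensorProduct.induction_on with
  | zero => simp
  | tmul a b =>
      rw [cop23_tmul, t13_tmulY, sw12_assoc, flipT_flipT, flipT_tmul, cop12_tmul]
  | add x y hx hy => rw [map_add, map_add, hx, hy, map_add, map_add, map_add]

lemma cop23_flip (x : A ⊗[F] A) :
    cop23 F A (flipT F A x) = rho (t13 (cop12 F A x)) := by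
  induction x using TensorProduct.induction_on with
  | zero => simp
  | tmul a b =>
      rw [cop12_tmul, t13_assoc, rho_tmulY, flipT_flipT, flipT_tmul, cop23_tmul]
  | add x y hx hy => rw [map_add, map_add, hx, hy, map_add, map_add, map_add]

lemma mapT_flip (f g : A →ₐ[F] A) (x : A ⊗[F] A) :
    mapT F A f g (flipT F A x) = flipT F A (mapT F A g f x) := by
  induction x using TensorProduct.induction_on with
  | zero => simp
  | tmul a b => simp [mapT, flipT]
  | add x y hx hy => rw [map_add, map_add, hx, hy, map_add, map_add]

lemma midcancel {M : Type*} [Monoid M] {u v : M} (h : u * v = 1) (w : M) :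
    u * (v * w) = w := by rw [← mul_assoc, h, one_mul]

lemma conjinv {M : Type*} [Monoid M] {u v x y : M} (hvu : v * u = 1) (h : u * x * v = y) :
    v * y * u = x := by
  rw [← h]
  have : v * (u * x * v) * u = (v * u) * x * (v * u) := by simp only [mul_assoc]
  rw [this, hvu, one_mul, mul_one]

lemma counit2l_tmul (a b : A) :
    counit2l F A (a ⊗ₜ[F] b) = Bialgebra.counitAlgHom F A a • b := by
  simp [counit2l]

lemma counit2r_tmul (a b : A) :
    counit2r F A (a ⊗ₜ[F] b) = Bialgebra.counitAlgHom F A b • a := by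
  simp [counit2r]

lemma counit2l_cop (a : A) : counit2l F A (cop F A a) = a := by
  have h : ∀ x : A ⊗[F] A,
      (Algebra.TensorProduct.map (Bialgebra.counitAlgHom F A) (AlgHom.id F A)) x =
        (LinearMap.rTensor A (Coalgebra.counit (R := F) (A := A))) x := by
    intro x
    induction x using TensorProduct.induction_on with
    | zero => simp
    | tmul a b => simp
    | add x y hx hy => rw [map_add, map_add, hx, hy]
  show (Algebra.TensorProduct.lid F A)
      ((Algebra.TensorProduct.map (Bialgebra.counitAlgHom F A) (AlgHom.id F A)) (cop F A a)) = a
  rw [h]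
  show (Algebra.TensorProduct.lid F A)
      ((LinearMap.rTensor A (Coalgebra.counit (R := F) (A := A))) (Coalgebra.comul a)) = a
  rw [Coalgebra.rTensor_counit_comul]
  simp

lemma counit2r_cop (a : A) : counit2r F A (cop F A a) = a := by
  have h : ∀ x : A ⊗[F] A,
      (Algebra.TensorProduct.map (AlgHom.id F A) (Bialgebra.counitAlgHom F A)) x =
        (LinearMap.lTensor A (Coalgebra.counit (R := F) (A := A))) x := by
    intro x
    induction x using TensorProduct.induction_on with
    | zero => simp
    | tmul a b => simp
    | add x y hx hy => rw [map_add, map_add, hx, hy]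
  show (Algebra.TensorProduct.rid F F A)
      ((Algebra.TensorProduct.map (AlgHom.id F A) (Bialgebra.counitAlgHom F A)) (cop F A a)) = a
  rw [h]
  show (Algebra.TensorProduct.rid F F A)
      ((LinearMap.lTensor A (Coalgebra.counit (R := F) (A := A))) (Coalgebra.comul a)) = a
  rw [Coalgebra.lTensor_counit_comul]
  simp

lemma counit2l_flip (x : A ⊗[F] A) : counit2l F A (flipT F A x) = counit2r F A x := by
  induction x using TensorProduct.induction_on with
  | zero => simp
  | tmul a b => rw [flipT_tmul, counit2l_tmul, counit2r_tmul]
  | add x y hx hy => rw [map_add, map_add, hx, hy, map_add]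

lemma counit2r_flip (x : A ⊗[F] A) : counit2r F A (flipT F A x) = counit2l F A x := by
  induction x using TensorProduct.induction_on with
  | zero => simp
  | tmul a b => rw [flipT_tmul, counit2r_tmul, counit2l_tmul]
  | add x y hx hy => rw [map_add, map_add, hx, hy, map_add]

/-- counit on the first leg of the triple tensor product -/
def eps1 : (A ⊗[F] (A ⊗[F] A)) →ₐ[F] (A ⊗[F] A) :=
  (Algebra.TensorProduct.lid F (A ⊗[F] A)).toAlgHom.comp
    (Algebra.TensorProduct.map (Bialgebra.counitAlgHom F A) (AlgHom.id F (A ⊗[F] A)))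

/-- counit on the third leg of the triple tensor product -/
def eps3 : (A ⊗[F] (A ⊗[F] A)) →ₐ[F] (A ⊗[F] A) :=
  Algebra.TensorProduct.map (AlgHom.id F A) (counit2r F A)

lemma eps1_tmul (a : A) (Y : A ⊗[F] A) :
    eps1 (a ⊗ₜ[F] Y) = Bialgebra.counitAlgHom F A a • Y := by
  simp [eps1]

lemma eps3_tmul (a : A) (Y : A ⊗[F] A) :
    eps3 (a ⊗ₜ[F] Y) = a ⊗ₜ[F] (counit2r F A Y) := by
  simp [eps3]

lemma eps1_assoc (Y : A ⊗[F] A) (a : A) :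
    eps1 (Algebra.TensorProduct.assoc F F F A A A (Y ⊗ₜ[F] a)) =
      (counit2l F A Y) ⊗ₜ[F] a := by
  induction Y using TensorProduct.induction_on with
  | zero => simp
  | tmul y1 y2 =>
      rw [Algebra.TensorProduct.assoc_tmul, eps1_tmul, counit2l_tmul,
        TensorProduct.smul_tmul']
  | add x y hx hy => rw [TensorProduct.add_tmul, map_add, map_add, hx, hy, map_add,
      TensorProduct.add_tmul]

lemma eps1_cop12 (x : A ⊗[F] A) : eps1 (cop12 F A x) = x := by
  induction x using TensorProduct.induction_on with
  | zero => simp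
  | tmul b a => rw [cop12_tmul, eps1_assoc, counit2l_cop]
  | add x y hx hy => rw [map_add, map_add, hx, hy]

lemma eps1_i13 (x : A ⊗[F] A) : eps1 (i13 F A x) = (1:A) ⊗ₜ[F] (counit2l F A x) := by
  induction x using TensorProduct.induction_on with
  | zero => simp
  | tmul a b =>
      rw [i13_tmul, eps1_tmul, counit2l_tmul, TensorProduct.tmul_smul]
  | add x y hx hy => rw [map_add, map_add, hx, hy, map_add, TensorProduct.tmul_add]

lemma eps1_i23 (x : A ⊗[F] A) : eps1 (i23 F A x) = x := by
  rw [i23_apply, eps1_tmul, map_one, one_smul]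

lemma eps3_cop23 (x : A ⊗[F] A) : eps3 (cop23 F A x) = x := by
  induction x using TensorProduct.induction_on with
  | zero => simp
  | tmul a b => rw [cop23_tmul, eps3_tmul, counit2r_cop]
  | add x y hx hy => rw [map_add, map_add, hx, hy]

lemma eps3_i13 (x : A ⊗[F] A) : eps3 (i13 F A x) = (counit2r F A x) ⊗ₜ[F] (1:A) := by
  induction x using TensorProduct.induction_on with
  | zero => simp
  | tmul a b =>
      rw [i13_tmul, eps3_tmul, counit2r_tmul, counit2r_tmul, TensorProduct.tmul_smul,
        TensorProduct.smul_tmul']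
  | add x y hx hy => rw [map_add, map_add, hx, hy, map_add, TensorProduct.add_tmul]

lemma eps3_i12 (x : A ⊗[F] A) : eps3 (i12 F A x) = x := by
  induction x using TensorProduct.induction_on with
  | zero => simp
  | tmul a b => rw [i12_tmul, eps3_tmul, counit2r_tmul, map_one, one_smul]
  | add x y hx hy => rw [map_add, map_add, hx, hy]

lemma counit2l_R {R Ri : A ⊗[F] A} (hQT : IsQT F A R Ri) : counit2l F A R = 1 := by
  have h := congrArg (eps1 (F := F) (A := A)) hQT.copL
  rw [eps1_cop12, map_mul, eps1_i13, eps1_i23] at h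
  have h2 := congrArg (fun z => z * Ri) h
  simp only [mul_assoc, hQT.mulInv, mul_one] at h2
  have h3 := congrArg (counit2l F A) h2
  rw [map_one, counit2l_tmul, map_one, one_smul] at h3
  exact h3.symm

lemma counit2r_R {R Ri : A ⊗[F] A} (hQT : IsQT F A R Ri) : counit2r F A R = 1 := by
  have h := congrArg (eps3 (F := F) (A := A)) hQT.copR
  rw [eps3_cop23, map_mul, eps3_i13, eps3_i12] at h
  have h2 := congrArg (fun z => z * Ri) h
  simp only [mul_assoc, hQT.mulInv, mul_one] at h2
  have h3 := congrArg (counit2r F A) h2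
  rw [map_one, counit2r_tmul, map_one, one_smul] at h3
  exact h3.symm

lemma mapinv {B : Type*} [Ring B] [Algebra F B] (f : (A ⊗[F] A) →ₐ[F] B)
    {x y : A ⊗[F] A} (h : x * y = 1) : f x * f y = 1 := by
  rw [← map_mul, h, map_one]

lemma ybe_lemma {R Ri : A ⊗[F] A} (hQT : IsQT F A R Ri) :
    i12 F A R * (i13 F A R * i23 F A R) = i23 F A R * (i13 F A R * i12 F A R) := by
  have h := conj12 hQT R
  rw [hQT.copL, map_mul, sw12_i13, sw12_i23] at h
  have h2 := congrArg (fun z => z * i12 F A R) h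
  simp only [mul_assoc] at h2
  rw [← map_mul, hQT.invMul, map_one, mul_one] at h2
  exact h2

lemma copLS_lemma {R Ri : A ⊗[F] A} (hQT : IsQT F A R Ri) :
    cop12 F A (flipT F A R) = i23 F A (flipT F A R) * i13 F A (flipT F A R) := by
  rw [cop12_flip, hQT.copR, map_mul, t13_i13, t13_i12, map_mul, sw12_i13, sw12_i23]

lemma copRS_lemma {R Ri : A ⊗[F] A} (hQT : IsQT F A R Ri) :
    cop23 F A (flipT F A R) = i12 F A (flipT F A R) * i13 F A (flipT F A R) := by
  rw [cop23_flip, hQT.copL, map_mul, t13_i13, t13_i23, map_mul, rho_i13, rho_i12]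

lemma ybeS_lemma {R Ri : A ⊗[F] A} (hQT : IsQT F A R Ri) :
    i12 F A (flipT F A R) * (i13 F A (flipT F A R) * i23 F A (flipT F A R)) =
      i23 F A (flipT F A R) * (i13 F A (flipT F A R) * i12 F A (flipT F A R)) := by
  have h := congrArg (t13 (F := F) (A := A)) (ybe_lemma hQT)
  simp only [map_mul, t13_i12, t13_i13, t13_i23] at h
  exact h.symm

lemma flipRRi {R Ri : A ⊗[F] A} (hQT : IsQT F A R Ri) :
    flipT F A R * flipT F A Ri = 1 := by rw [← map_mul, hQT.mulInv, map_one]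

lemma flipRiR {R Ri : A ⊗[F] A} (hQT : IsQT F A R Ri) :
    flipT F A Ri * flipT F A R = 1 := by rw [← map_mul, hQT.invMul, map_one]

lemma copLSi_lemma {R Ri : A ⊗[F] A} (hQT : IsQT F A R Ri) :
    cop12 F A (flipT F A Ri) = i13 F A (flipT F A Ri) * i23 F A (flipT F A Ri) := by
  have hr : cop12 F A (flipT F A R) * cop12 F A (flipT F A Ri) = 1 :=
    mapinv (cop12 F A) (flipRRi hQT)
  have hl : (i13 F A (flipT F A Ri) * i23 F A (flipT F A Ri)) *
      cop12 F A (flipT F A R) = 1 := by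
    rw [copLS_lemma hQT]
    simp only [mul_assoc]
    rw [midcancel (mapinv (i23 F A) (flipRiR hQT)), mapinv (i13 F A) (flipRiR hQT)]
  exact (left_inv_eq_right_inv hl hr).symm

lemma copRSi_lemma {R Ri : A ⊗[F] A} (hQT : IsQT F A R Ri) :
    cop23 F A (flipT F A Ri) = i13 F A (flipT F A Ri) * i12 F A (flipT F A Ri) := by
  have hr : cop23 F A (flipT F A R) * cop23 F A (flipT F A Ri) = 1 :=
    mapinv (cop23 F A) (flipRRi hQT)
  have hl : (i13 F A (flipT F A Ri) * i12 F A (flipT F A Ri)) *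
      cop23 F A (flipT F A R) = 1 := by
    rw [copRS_lemma hQT]
    simp only [mul_assoc]
    rw [midcancel (mapinv (i12 F A) (flipRiR hQT)), mapinv (i13 F A) (flipRiR hQT)]
  exact (left_inv_eq_right_inv hl hr).symm

lemma cocycle2_lemma {R Ri : A ⊗[F] A} (hQT : IsQT F A R Ri) :
    i12 F A (flipT F A Ri) * cop12 F A (flipT F A Ri) =
      i23 F A (flipT F A Ri) * cop23 F A (flipT F A Ri) := by
  rw [copLSi_lemma hQT, copRSi_lemma hQT]
  have hl : (i12 F A (flipT F A Ri) * (i13 F A (flipT F A Ri) * i23 F A (flipT F A Ri))) *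
      (i23 F A (flipT F A R) * (i13 F A (flipT F A R) * i12 F A (flipT F A R))) = 1 := by
    simp only [mul_assoc]
    rw [midcancel (mapinv (i23 F A) (flipRiR hQT)),
      midcancel (mapinv (i13 F A) (flipRiR hQT)), mapinv (i12 F A) (flipRiR hQT)]
  have hr0 : (i12 F A (flipT F A R) * (i13 F A (flipT F A R) * i23 F A (flipT F A R))) *
      (i23 F A (flipT F A Ri) * (i13 F A (flipT F A Ri) * i12 F A (flipT F A Ri))) = 1 := by
    simp only [mul_assoc]
    rw [midcancel (mapinv (i23 F A) (flipRRi hQT)),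
      midcancel (mapinv (i13 F A) (flipRRi hQT)), mapinv (i12 F A) (flipRRi hQT)]
  rw [ybeS_lemma hQT] at hr0
  exact left_inv_eq_right_inv hl hr0

lemma counit2r_Ri {R Ri : A ⊗[F] A} (hQT : IsQT F A R Ri) : counit2r F A Ri = 1 := by
  have h : counit2r F A R * counit2r F A Ri = 1 := mapinv (counit2r F A) hQT.mulInv
  rw [counit2r_R hQT, one_mul] at h
  exact h

lemma counit2l_Ri {R Ri : A ⊗[F] A} (hQT : IsQT F A R Ri) : counit2l F A Ri = 1 := by
  have h : counit2l F A R * counit2l F A Ri = 1 := mapinv (counit2l F A) hQT.mulInv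
  rw [counit2l_R hQT, one_mul] at h
  exact h

end Aux

/-- an automorphism of quasitriangular bialgebras `υ` gives the twist
pairs `(υ, R)` and `(υ, (R₂₁)⁻¹)`. -/
theorem statement19 {F A : Type*} [Field F] [Ring A] [Bialgebra F A]
    (R Ri : A ⊗[F] A) (hQT : IsQT F A R Ri)
    (υ : A ≃ₐ[F] A)
    (hcm : ∀ a : A, cop F A (υ a) = mapT F A υ.toAlgHom υ.toAlgHom (cop F A a))
    (hce : ∀ a : A, Bialgebra.counitAlgHom F A (υ a) = Bialgebra.counitAlgHom F A a)
    (hR : mapT F A υ.toAlgHom υ.toAlgHom R = R) :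
    IsTwistPair F A R Ri R Ri υ ∧
    IsTwistPair F A R Ri (flipT F A Ri) (flipT F A R) υ := by
  have hOp : ∀ a : A, mapT F A υ.toAlgHom υ.toAlgHom (copOp F A (υ.symm a)) = copOp F A a := by
    intro a
    rw [copOp_eq, mapT_flip, ← hcm, AlgEquiv.apply_symm_apply, ← copOp_eq]
  have hIntw2 : ∀ a : A, copOp F A a = flipT F A Ri * cop F A a * flipT F A R := by
    intro a
    have h2 : Ri * copOp F A a * R = cop F A a := conjinv hQT.invMul (hQT.intw a)
    have h3 := congrArg (flipT F A) h2
    rw [map_mul, map_mul, copOp_eq, flipT_flipT, ← copOp_eq] at h3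
    exact h3.symm
  refine ⟨⟨hQT.mulInv, hQT.invMul, ?_, counit2l_R hQT, counit2r_R hQT, ?_, ?_⟩,
    ⟨flipRiR hQT, flipRRi hQT, cocycle2_lemma hQT, ?_, ?_, ?_, ?_⟩⟩
  · rw [hQT.copL, hQT.copR]
    exact ybe_lemma hQT
  · intro a
    rw [hOp a, ← hQT.intw a]
  · rw [hR, mul_assoc, hQT.mulInv, mul_one]
  · rw [counit2l_flip]
    exact counit2r_Ri hQT
  · rw [counit2r_flip]
    exact counit2l_Ri hQT
  · intro a
    rw [hOp a]
    exact hIntw2 a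
  · rw [hR, flipT_flipT, hQT.invMul, one_mul]
end
end
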